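/- arXiv:2506.11401 — 6 statements merged into one kernel-verified Lean document; each statement's English description precedes it below -/
import Mathlib

section
/- If $(A - \lambda I_n)^\ell u = 0$ and $(B - \mu I_m)^k v = 0$ for vectors $u \in \mathbb{C}^n$, $v \in \mathbb{C}^m$, then $(A\otimes I_m + I_n\otimes B - (\lambda+\mu) I_{nm})^{\ell+k}(u\otimes v) = 0$, i.e., $u\otimes v$ is a generalized eigenvector of $A\otimes I_m + I_n\otimes B$ for the eigenvalue $\lambda+\mu$. -/
open Kronecker Matrix

lemma kron_mulVec {n m : ℕ} (X : Matrix (Fin n) (Fin n) ℂ) (Y : Matrix (Fin m) (Fin m) ℂ)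
    (u : Fin n → ℂ) (v : Fin m → ℂ) :
    (X ⊗ₖ Y).mulVec (fun p => u p.1 * v p.2) =
      fun p => X.mulVec u p.1 * Y.mulVec v p.2 := by
  ext p
  simp only [Matrix.mulVec, dotProduct, kroneckerMap_apply, Fintype.sum_prod_type,
    Finset.mul_sum, Finset.sum_mul]
  rw [Finset.sum_comm]
  apply Finset.sum_congr rfl; intro i _
  apply Finset.sum_congr rfl; intro j _
  ring

lemma kron_one_pow {n m : ℕ} (X : Matrix (Fin n) (Fin n) ℂ) (i : ℕ) :
    (X ⊗ₖ (1 : Matrix (Fin m) (Fin m) ℂ)) ^ i = (X ^ i) ⊗ₖ 1 := by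
  induction i with
  | zero => simp [Matrix.one_kronecker_one]
  | succ i ih => rw [pow_succ, pow_succ, ih, ← Matrix.mul_kronecker_mul, one_mul]

lemma one_kron_pow {n m : ℕ} (Y : Matrix (Fin m) (Fin m) ℂ) (i : ℕ) :
    ((1 : Matrix (Fin n) (Fin n) ℂ) ⊗ₖ Y) ^ i = 1 ⊗ₖ (Y ^ i) := by
  induction i with
  | zero => simp [Matrix.one_kronecker_one]
  | succ i ih => rw [pow_succ, pow_succ, ih, ← Matrix.mul_kronecker_mul, one_mul]

lemma sum_mulVec' {ι : Type*} {P : Type*} [Fintype P] (s : Finset ι)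
    (f : ι → Matrix P P ℂ) (x : P → ℂ) :
    (∑ i ∈ s, f i).mulVec x = ∑ i ∈ s, (f i).mulVec x := by
  ext p
  simp only [Finset.sum_apply, Matrix.mulVec, dotProduct, Finset.sum_mul,
    Matrix.sum_apply]
  rw [Finset.sum_comm]

/-- If `(A - λI)^ℓ u = 0` and `(B - μI)^k v = 0`, then `u ⊗ v` is a generalized
eigenvector of `A ⊗ I + I ⊗ B` for the eigenvalue `λ + μ`:
`(A ⊗ I + I ⊗ B - (λ+μ)I)^(ℓ+k) (u ⊗ v) = 0`. -/
theorem kronecker_sum_generalized_eigenvector (n m : ℕ)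
    (A : Matrix (Fin n) (Fin n) ℂ) (B : Matrix (Fin m) (Fin m) ℂ)
    (lam mu : ℂ) (ℓ k : ℕ) (u : Fin n → ℂ) (v : Fin m → ℂ)
    (hu : ((A - lam • (1 : Matrix (Fin n) (Fin n) ℂ)) ^ ℓ).mulVec u = 0)
    (hv : ((B - mu • (1 : Matrix (Fin m) (Fin m) ℂ)) ^ k).mulVec v = 0) :
    (((A ⊗ₖ (1 : Matrix (Fin m) (Fin m) ℂ) + (1 : Matrix (Fin n) (Fin n) ℂ) ⊗ₖ B)
        - (lam + mu) • (1 : Matrix (Fin n × Fin m) (Fin n × Fin m) ℂ)) ^ (ℓ + k)).mulVec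
      (fun p => u p.1 * v p.2) = 0 := by
  set A' := A - lam • (1 : Matrix (Fin n) (Fin n) ℂ) with hA'
  set B' := B - mu • (1 : Matrix (Fin m) (Fin m) ℂ) with hB'
  have key : (A ⊗ₖ (1 : Matrix (Fin m) (Fin m) ℂ) + (1 : Matrix (Fin n) (Fin n) ℂ) ⊗ₖ B)
      - (lam + mu) • (1 : Matrix (Fin n × Fin m) (Fin n × Fin m) ℂ)
      = A' ⊗ₖ (1 : Matrix (Fin m) (Fin m) ℂ) + (1 : Matrix (Fin n) (Fin n) ℂ) ⊗ₖ B' := by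
    rw [hA', hB', sub_eq_add_neg A, sub_eq_add_neg B, ← neg_smul, ← neg_smul,
      Matrix.add_kronecker, Matrix.kronecker_add, Matrix.smul_kronecker,
      Matrix.kronecker_smul, Matrix.one_kronecker_one, neg_smul, neg_smul, add_smul]
    abel
  rw [key]
  have hcomm : Commute (A' ⊗ₖ (1 : Matrix (Fin m) (Fin m) ℂ))
      ((1 : Matrix (Fin n) (Fin n) ℂ) ⊗ₖ B') := by
    unfold Commute SemiconjBy
    rw [← Matrix.mul_kronecker_mul, ← Matrix.mul_kronecker_mul, one_mul, mul_one, one_mul, mul_one]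
  rw [hcomm.add_pow, sum_mulVec']
  apply Finset.sum_eq_zero
  intro i hi
  rw [Finset.mem_range] at hi
  rw [← Matrix.mulVec_mulVec, Matrix.natCast_mulVec, Matrix.mulVec_smul,
    ← Matrix.mulVec_mulVec, kron_one_pow, one_kron_pow, kron_mulVec, kron_mulVec]
  rcases le_or_gt ℓ i with h | h
  · have h0 : (A' ^ i).mulVec u = 0 := by
      rw [← Nat.sub_add_cancel h, pow_add, ← Matrix.mulVec_mulVec, hu, Matrix.mulVec_zero]
    simp [Matrix.one_mulVec, h0]
    exact Or.inr rfl
  · have hk : k ≤ ℓ + k - i := by omega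
    have h0 : (B' ^ (ℓ + k - i)).mulVec v = 0 := by
      rw [← Nat.sub_add_cancel hk, pow_add, ← Matrix.mulVec_mulVec, hv, Matrix.mulVec_zero]
    simp [Matrix.one_mulVec, h0]
    exact Or.inr rfl
end

section
/- For any graph $G$ of order $n$, $\rho(G) + \rho(\overline{G}) < \sqrt{2}(n-1)$, where $\rho$ denotes the adjacency spectral radius and $\overline{G}$ the complement graph. -/
open Polynomial Matrix Finset

/-- The spectral radius of a real square matrix: the maximum modulus of its
complex eigenvalues (roots of the characteristic polynomial over `ℂ`). -/
noncomputable def specRad {n : ℕ} (A : Matrix (Fin n) (Fin n) ℝ) : ℝ :=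
  sSup {x : ℝ | ∃ μ : ℂ, (A.map Complex.ofReal).charpoly.IsRoot μ ∧ x = ‖μ‖}

set_option maxHeartbeats 1000000



open Polynomial Matrix Finset

lemma nik_charpoly_conj {R : Type*} [CommRing R] {k : ℕ} (U B V : Matrix (Fin k) (Fin k) R)
    (hUV : U * V = 1) (hVU : V * U = 1) : (U * B * V).charpoly = B.charpoly := by
  have hmap : ∀ M N : Matrix (Fin k) (Fin k) R,
      (C : R →+* R[X]).mapMatrix (M * N) = (C : R →+* R[X]).mapMatrix M *
        (C : R →+* R[X]).mapMatrix N := fun M N => by simp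
  have hcomm : (C : R →+* R[X]).mapMatrix U * Matrix.scalar (Fin k) (X : R[X]) =
      Matrix.scalar (Fin k) (X : R[X]) * (C : R →+* R[X]).mapMatrix U :=
    ((Matrix.scalar_commute (X : R[X]) (fun m => Commute.all X m) _)).symm
  have key : charmatrix (U * B * V) =
      (C : R →+* R[X]).mapMatrix U * charmatrix B * (C : R →+* R[X]).mapMatrix V := by
    unfold charmatrix
    rw [mul_sub, sub_mul, hmap, hmap]
    congr 1
    rw [hcomm, mul_assoc, ← hmap, hUV]
    simp
  unfold Matrix.charpoly
  rw [key, det_mul, det_mul, mul_comm, ← mul_assoc, ← det_mul, ← RingHom.map_mul, hVU]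
  simp

lemma nik_charpoly_diagonal {R : Type*} [CommRing R] {k : ℕ} (d : Fin k → R) :
    (diagonal d).charpoly = ∏ i, (X - C (d i)) := by
  unfold Matrix.charpoly
  have : charmatrix (diagonal d) = diagonal (fun i => (X : R[X]) - C (d i)) := by
    ext i j
    by_cases h : i = j
    · subst h; simp
    · simp [h, charmatrix_apply_ne _ _ _ h, diagonal_apply_ne _ h]
  rw [this, det_diagonal]


section herm
variable {k : ℕ} {B : Matrix (Fin k) (Fin k) ℝ} (hB : B.IsHermitian)

lemma nik_ofReal_comp : (RCLike.ofReal ∘ hB.eigenvalues : Fin k → ℝ) = hB.eigenvalues := by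
  funext i; simp

lemma nik_charpoly_hermitian : B.charpoly = ∏ i, (X - C (hB.eigenvalues i)) := by
  have hU1 : (hB.eigenvectorUnitary : Matrix (Fin k) (Fin k) ℝ) *
      star (hB.eigenvectorUnitary : Matrix (Fin k) (Fin k) ℝ) = 1 :=
    (Matrix.mem_unitaryGroup_iff).mp (hB.eigenvectorUnitary).2
  have hU2 : star (hB.eigenvectorUnitary : Matrix (Fin k) (Fin k) ℝ) *
      (hB.eigenvectorUnitary : Matrix (Fin k) (Fin k) ℝ) = 1 :=
    (Matrix.mem_unitaryGroup_iff').mp (hB.eigenvectorUnitary).2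
  conv_lhs => rw [hB.spectral_theorem, Unitary.conjStarAlgAut_apply]
  rw [nik_charpoly_conj _ _ _ hU1 hU2, nik_ofReal_comp, nik_charpoly_diagonal]

lemma nik_trace_eigen : B.trace = ∑ i, hB.eigenvalues i := by
  have hU2 : star (hB.eigenvectorUnitary : Matrix (Fin k) (Fin k) ℝ) *
      (hB.eigenvectorUnitary : Matrix (Fin k) (Fin k) ℝ) = 1 :=
    (Matrix.mem_unitaryGroup_iff').mp (hB.eigenvectorUnitary).2
  conv_lhs => rw [hB.spectral_theorem, Unitary.conjStarAlgAut_apply]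
  rw [Matrix.trace_mul_cycle, hU2, one_mul, nik_ofReal_comp, trace_diagonal]

lemma nik_trace_sq_eigen : (B * B).trace = ∑ i, hB.eigenvalues i ^ 2 := by
  have hU2 : star (hB.eigenvectorUnitary : Matrix (Fin k) (Fin k) ℝ) *
      (hB.eigenvectorUnitary : Matrix (Fin k) (Fin k) ℝ) = 1 :=
    (Matrix.mem_unitaryGroup_iff').mp (hB.eigenvectorUnitary).2
  have key : B * B = (hB.eigenvectorUnitary : Matrix (Fin k) (Fin k) ℝ) *
      diagonal (fun i => hB.eigenvalues i ^ 2) *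
      star (hB.eigenvectorUnitary : Matrix (Fin k) (Fin k) ℝ) := by
    conv_lhs => rw [hB.spectral_theorem, Unitary.conjStarAlgAut_apply]
    rw [nik_ofReal_comp]
    simp only [mul_assoc]
    rw [← mul_assoc (star (hB.eigenvectorUnitary : Matrix (Fin k) (Fin k) ℝ))
      (hB.eigenvectorUnitary : Matrix (Fin k) (Fin k) ℝ), hU2, one_mul,
      ← mul_assoc (diagonal hB.eigenvalues) (diagonal hB.eigenvalues), diagonal_mul_diagonal]
    congr 1
    ext i
    ring
  rw [key, Matrix.trace_mul_cycle, hU2, one_mul, trace_diagonal]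

lemma nik_root_iff (μ : ℂ) :
    (B.map Complex.ofReal).charpoly.IsRoot μ ↔ ∃ i, (hB.eigenvalues i : ℂ) = μ := by
  have h1 : (B.map Complex.ofReal).charpoly = B.charpoly.map (Complex.ofRealHom) := by
    have h0 : B.map Complex.ofReal = B.map (Complex.ofRealHom : ℝ →+* ℂ) := rfl
    rw [h0, Matrix.charpoly_map]
  rw [h1, nik_charpoly_hermitian hB, Polynomial.map_prod]
  simp only [Polynomial.map_sub, map_X, map_C]
  rw [IsRoot.def, eval_prod, Finset.prod_eq_zero_iff]
  simp only [mem_univ, true_and, eval_sub, eval_X, eval_C, sub_eq_zero]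
  exact exists_congr fun i => eq_comm

end herm


section herm
variable {k : ℕ} {B : Matrix (Fin k) (Fin k) ℝ} (hB : B.IsHermitian)

lemma nik_specRad_le {b : ℝ} (hb : 0 ≤ b) (h : ∀ i, |hB.eigenvalues i| ≤ b) :
    specRad B ≤ b := by
  apply Real.sSup_le _ hb
  rintro x ⟨μ, hroot, rfl⟩
  obtain ⟨i, hi⟩ := (nik_root_iff hB μ).mp hroot
  rw [← hi, Complex.norm_real, Real.norm_eq_abs]
  exact h i

lemma nik_specRad_lt {b : ℝ} (hb : 0 < b) (h : ∀ i, |hB.eigenvalues i| < b) :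
    specRad B < b := by
  set S := {x : ℝ | ∃ μ : ℂ, (B.map Complex.ofReal).charpoly.IsRoot μ ∧ x = ‖μ‖}
    with hSdef
  have hsub : S ⊆ (fun i => |hB.eigenvalues i|) '' Set.univ := by
    rintro x ⟨μ, hroot, rfl⟩
    obtain ⟨i, hi⟩ := (nik_root_iff hB μ).mp hroot
    exact ⟨i, Set.mem_univ i, by rw [← hi, Complex.norm_real, Real.norm_eq_abs]⟩
  rcases S.eq_empty_or_nonempty with hS | hS
  · rw [show specRad B = sSup S from rfl, hS, Real.sSup_empty]
    exact hb
  · have hfin : S.Finite := (Set.finite_univ.image _).subset hsub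
    have hmem := hS.csSup_mem hfin
    obtain ⟨i, -, hi⟩ := hsub hmem
    rw [show specRad B = sSup S from rfl, ← hi]
    exact h i

lemma nik_conj_root (Bq : Matrix (Fin k) (Fin k) ℚ) (hBq : Bq.map (algebraMap ℚ ℝ) = B)
    {i : Fin k} {c : ℚ} (hc : hB.eigenvalues i ^ 2 = (c : ℝ))
    (hirr : Irrational (hB.eigenvalues i)) :
    ∃ j, hB.eigenvalues j = - hB.eigenvalues i := by
  set ρ := hB.eigenvalues i with hρ
  have hPmap : B.charpoly = Bq.charpoly.map (algebraMap ℚ ℝ) := by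
    rw [← hBq, Matrix.charpoly_map]
  have haev : Polynomial.aeval ρ Bq.charpoly = 0 := by
    rw [aeval_def, ← eval_map, ← hPmap, nik_charpoly_hermitian hB, eval_prod]
    exact Finset.prod_eq_zero (mem_univ i) (by simp [hρ])
  have hint : IsIntegral ℚ ρ := ⟨Bq.charpoly, Bq.charpoly_monic, by rw [← aeval_def]; exact haev⟩
  set q : ℚ[X] := X ^ 2 - C c with hqdef
  have hqmono : q.Monic := monic_X_pow_sub_C c two_ne_zero
  have hq : Polynomial.aeval ρ q = 0 := by
    simp only [hqdef, map_sub, map_pow, aeval_X, aeval_C, hc]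
    simp [hc]
  have hd1 : minpoly ℚ ρ ∣ q := minpoly.dvd ℚ ρ hq
  have hd2 : minpoly ℚ ρ ∣ Bq.charpoly := minpoly.dvd ℚ ρ haev
  have hqdeg : q.natDegree = 2 := by
    rw [hqdef]
    compute_degree!
  have hdeg2 : 2 ≤ (minpoly ℚ ρ).natDegree := by
    rw [minpoly.two_le_natDegree_iff hint]
    rintro ⟨r, hr⟩
    exact hirr ⟨r, by exact_mod_cast hr⟩
  have hqeq : q = minpoly ℚ ρ := by
    obtain ⟨r, hr⟩ := hd1
    have hmne : minpoly ℚ ρ ≠ 0 := minpoly.ne_zero hint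
    have hrne : r ≠ 0 := by
      rintro rfl
      rw [mul_zero] at hr
      exact hqmono.ne_zero hr
    have hdeg : q.natDegree = (minpoly ℚ ρ).natDegree + r.natDegree := by
      rw [hr, Polynomial.natDegree_mul hmne hrne]
    have hr0 : r.natDegree = 0 := by omega
    obtain ⟨a, rfl⟩ := Polynomial.natDegree_eq_zero.mp hr0
    have : (1 : ℚ) = (minpoly ℚ ρ).leadingCoeff * a := by
      have := congrArg Polynomial.leadingCoeff hr
      rwa [hqmono.leadingCoeff, Polynomial.leadingCoeff_mul, Polynomial.leadingCoeff_C] at this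
    rw [(minpoly.monic hint).leadingCoeff, one_mul] at this
    rw [hr, ← this]
    simp
  have hneg : Polynomial.eval (-ρ) B.charpoly = 0 := by
    obtain ⟨s, hs⟩ := hd2
    rw [hPmap, eval_map, ← aeval_def, hs, ← hqeq, _root_.map_mul]
    have : Polynomial.aeval (-ρ) q = 0 := by
      simp only [hqdef, map_sub, map_pow, aeval_X, aeval_C]
      simp [hc]
    rw [this, zero_mul]
  rw [nik_charpoly_hermitian hB, eval_prod] at hneg
  obtain ⟨j, -, hj⟩ := Finset.prod_eq_zero_iff.mp hneg
  refine ⟨j, ?_⟩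
  simp only [eval_sub, eval_X, eval_C, sub_eq_zero] at hj
  exact hj.symm

end herm


lemma nik_irr (x : ℝ) (s : ℚ) (hs : s ≠ 0) (hx : x ^ 2 = 2 * (s : ℝ) ^ 2) : Irrational x := by
  have h1 : Irrational ((s : ℝ) * Real.sqrt 2) := irrational_sqrt_two.ratCast_mul hs
  have hsq : Real.sqrt 2 ^ 2 = 2 := Real.sq_sqrt (by norm_num)
  have h2 : (x - s * Real.sqrt 2) * (x + s * Real.sqrt 2) = 0 := by nlinarith [hsq, hx]
  rcases mul_eq_zero.mp h2 with h | h
  · rw [show x = (s : ℝ) * Real.sqrt 2 by linarith]; exact h1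
  · rw [show x = -((s : ℝ) * Real.sqrt 2) by linarith]; exact h1.neg

lemma nik_eig_bound {k : ℕ} (e : Fin k → ℝ) (t : ℝ) (hsum : ∑ j, e j = 0)
    (hsq : ∑ j, e j ^ 2 = t) (i : Fin k) : (k : ℝ) * e i ^ 2 ≤ ((k : ℝ) - 1) * t := by
  have hk : 1 ≤ k := i.pos
  have h1 : ∑ j ∈ univ.erase i, e j = - e i := by
    rw [← Finset.sum_erase_add _ _ (mem_univ i)] at hsum; linarith
  have h2 : ∑ j ∈ univ.erase i, e j ^ 2 = t - e i ^ 2 := by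
    rw [← Finset.sum_erase_add _ _ (mem_univ i)] at hsq; linarith
  have h3 := sq_sum_le_card_mul_sum_sq (s := univ.erase i) (f := e)
  rw [h1, h2, Finset.card_erase_of_mem (mem_univ i), Finset.card_univ, Fintype.card_fin] at h3
  have hc : ((k - 1 : ℕ) : ℝ) = (k : ℝ) - 1 := by
    push_cast [Nat.cast_sub hk]; ring
  rw [hc] at h3
  nlinarith [h3]

section graph
variable {n : ℕ} (H : SimpleGraph (Fin n)) [DecidableRel H.Adj]

lemma nik_adj_herm : (H.adjMatrix ℝ).IsHermitian := by
  show _ = _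
  ext i j
  simp [Matrix.conjTranspose_apply, SimpleGraph.adjMatrix_apply, H.adj_comm]

lemma nik_adj_map : (H.adjMatrix ℚ).map (algebraMap ℚ ℝ) = H.adjMatrix ℝ := by
  ext i j
  simp [Matrix.map_apply, SimpleGraph.adjMatrix_apply, apply_ite]

lemma nik_sum_eig : ∑ i, (nik_adj_herm H).eigenvalues i = 0 := by
  rw [← nik_trace_eigen (nik_adj_herm H)]
  exact SimpleGraph.trace_adjMatrix ℝ H

lemma nik_sum_eig_sq : ∑ i, (nik_adj_herm H).eigenvalues i ^ 2 = ((∑ v, H.degree v : ℕ) : ℝ) := by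
  rw [← nik_trace_sq_eigen (nik_adj_herm H)]
  rw [Matrix.trace]
  push_cast
  congr 1
  funext i
  rw [Matrix.diag_apply, SimpleGraph.adjMatrix_mul_self_apply_self]

lemma nik_specRad_le_sqrt (hn : 1 ≤ n) :
    specRad (H.adjMatrix ℝ) ≤
      Real.sqrt (((n : ℝ) - 1) * ((∑ v, H.degree v : ℕ) : ℝ) / n) := by
  apply nik_specRad_le (nik_adj_herm H) (Real.sqrt_nonneg _)
  intro i
  have hb := nik_eig_bound _ _ (nik_sum_eig H) (nik_sum_eig_sq H) i
  have hn0 : (0 : ℝ) < n := by exact_mod_cast hn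
  calc |(nik_adj_herm H).eigenvalues i| = Real.sqrt ((nik_adj_herm H).eigenvalues i ^ 2) :=
        (Real.sqrt_sq_eq_abs _).symm
    _ ≤ _ := Real.sqrt_le_sqrt (by rw [le_div_iff₀ hn0]; nlinarith)

lemma nik_strict (hn3 : 3 ≤ n)
    (hT : ((∑ v, H.degree v : ℕ) : ℝ) = (n : ℝ) * ((n : ℝ) - 1) / 2) :
    specRad (H.adjMatrix ℝ) < Real.sqrt (((n : ℝ) - 1) ^ 2 / 2) := by
  have hn3R : (3 : ℝ) ≤ (n : ℝ) := by exact_mod_cast hn3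
  have hn1 : (1 : ℝ) ≤ (n : ℝ) - 1 := by linarith
  have hbpos : 0 < Real.sqrt (((n : ℝ) - 1) ^ 2 / 2) := Real.sqrt_pos.mpr (by positivity)
  apply nik_specRad_lt (nik_adj_herm H) hbpos
  intro i
  set e := (nik_adj_herm H).eigenvalues with he
  have hb := nik_eig_bound _ _ (nik_sum_eig H) (nik_sum_eig_sq H) i
  rw [hT] at hb
  have hn0 : (0 : ℝ) < n := by linarith
  have hle : e i ^ 2 ≤ ((n : ℝ) - 1) ^ 2 / 2 := by
    rw [← he] at hb
    nlinarith
  rcases lt_or_eq_of_le hle with hlt | heq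
  · calc |e i| = Real.sqrt (e i ^ 2) := (Real.sqrt_sq_eq_abs _).symm
      _ < _ := Real.sqrt_lt_sqrt (sq_nonneg _) hlt
  · exfalso
    -- equality case: Galois conjugate argument
    have hne0 : e i ≠ 0 := by
      intro h0
      rw [h0] at heq
      simp at heq
      nlinarith
    have hs : ((n : ℚ) - 1) / 2 ≠ 0 := by
      have : (3 : ℚ) ≤ (n : ℚ) := by exact_mod_cast hn3
      intro h
      rw [_root_.div_eq_zero_iff] at h
      rcases h with h | h <;> [linarith; norm_num at h]
    have hirr : Irrational (e i) := by
      apply nik_irr _ (((n : ℚ) - 1) / 2) hs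
      rw [heq]
      push_cast
      ring
    have hc : e i ^ 2 = ((((n : ℚ) - 1) ^ 2 / 2 : ℚ) : ℝ) := by
      rw [heq]; push_cast; ring
    obtain ⟨j, hj⟩ := nik_conj_root (nik_adj_herm H) (H.adjMatrix ℚ) (nik_adj_map H) hc hirr
    have hij : i ≠ j := by
      intro h
      rw [← h] at hj
      rw [← he] at hj
      have : e i = 0 := by linarith
      exact hne0 this
    have hpair : e i ^ 2 + e j ^ 2 ≤ ((∑ v, H.degree v : ℕ) : ℝ) := by
      rw [← nik_sum_eig_sq H, ← he]
      have hsub : ({i, j} : Finset (Fin n)) ⊆ univ := subset_univ _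
      have := Finset.sum_le_sum_of_subset_of_nonneg hsub
        (fun k _ _ => sq_nonneg (e k))
      rwa [Finset.sum_pair hij] at this
    rw [← he] at hj
    rw [hj, hT] at hpair
    nlinarith [heq, hpair, hn3R]
end graph


/-- Nikiforov (2007): for every graph `G` of order `n ≥ 2`,
`ρ(G) + ρ(Ḡ) < √2 (n - 1)`. -/
theorem nikiforov_bound (n : ℕ) (hn : 2 ≤ n) (G : SimpleGraph (Fin n))
    [DecidableRel G.Adj] :
    specRad (G.adjMatrix ℝ) + specRad (Gᶜ.adjMatrix ℝ) < Real.sqrt 2 * ((n : ℝ) - 1) := by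
  classical
  have hnR : (2 : ℝ) ≤ (n : ℝ) := by exact_mod_cast hn
  have hn0 : (0 : ℝ) < n := by linarith
  set T : ℕ := ∑ v, G.degree v with hTdef
  set T' : ℕ := ∑ v, Gᶜ.degree v with hT'def
  have hdegsum : ∀ v, G.degree v + Gᶜ.degree v = n - 1 := by
    intro v
    have h1 : Gᶜ.degree v = Fintype.card (Fin n) - 1 - G.degree v := G.degree_compl v
    have h2 : G.degree v < Fintype.card (Fin n) := G.degree_lt_card_verts v
    rw [Fintype.card_fin] at h1 h2
    omega
  have hTT' : T + T' = n * (n - 1) := by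
    rw [hTdef, hT'def, ← Finset.sum_add_distrib]
    simp only [hdegsum]
    rw [Finset.sum_const, Finset.card_univ, Fintype.card_fin, smul_eq_mul]
  have hTT'R : (T : ℝ) + (T' : ℝ) = (n : ℝ) * ((n : ℝ) - 1) := by
    have h1 : ((T + T' : ℕ) : ℝ) = ((n * (n - 1) : ℕ) : ℝ) := congrArg (fun x : ℕ => (x : ℝ)) hTT'
    push_cast [Nat.cast_sub (by omega : 1 ≤ n)] at h1
    linarith
  have h1 := nik_specRad_le_sqrt G (by omega)
  have h2 := nik_specRad_le_sqrt Gᶜ (by omega)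
  rw [← hTdef] at h1
  rw [← hT'def] at h2
  have hn1pos : (0 : ℝ) < (n : ℝ) - 1 := by linarith
  have hn1R : (0 : ℝ) ≤ (n : ℝ) - 1 := le_of_lt hn1pos
  by_cases hTeq : T = T'
  · -- balanced case: use strict eigenvalue bound
    have hn3 : 3 ≤ n := by
      rcases Nat.lt_or_ge n 3 with h | h
      · exfalso
        have hn2 : n = 2 := by omega
        rw [hn2] at hTT'
        norm_num at hTT'
        obtain ⟨E, hE⟩ : ∃ E, T = 2 * E := ⟨_, G.sum_degrees_eq_twice_card_edges⟩
        omega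
      · exact h
    have hTval : (T : ℝ) = (n : ℝ) * ((n : ℝ) - 1) / 2 := by
      have : (T : ℝ) = (T' : ℝ) := by rw [hTeq]
      linarith
    have hT'val : (T' : ℝ) = (n : ℝ) * ((n : ℝ) - 1) / 2 := by
      have : (T : ℝ) = (T' : ℝ) := by rw [hTeq]
      linarith
    have s1 := nik_strict G hn3 (by rw [← hTdef]; exact hTval)
    have s2 := nik_strict Gᶜ hn3 (by rw [← hT'def]; exact hT'val)
    have hkey : Real.sqrt (((n : ℝ) - 1) ^ 2 / 2) + Real.sqrt (((n : ℝ) - 1) ^ 2 / 2) =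
        Real.sqrt 2 * ((n : ℝ) - 1) := by
      have hs2 : Real.sqrt 2 * Real.sqrt 2 = 2 := Real.mul_self_sqrt (by norm_num)
      have hs2pos : 0 < Real.sqrt 2 := Real.sqrt_pos.mpr (by norm_num)
      have : Real.sqrt (((n : ℝ) - 1) ^ 2 / 2) = ((n : ℝ) - 1) / Real.sqrt 2 := by
        rw [show ((n : ℝ) - 1) ^ 2 / 2 = (((n : ℝ) - 1) / Real.sqrt 2) ^ 2 by
          rw [div_pow]; congr 1; nlinarith [hs2]]
        exact Real.sqrt_sq (le_of_lt (div_pos hn1pos hs2pos))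
      rw [this, ← add_div, div_eq_iff (ne_of_gt hs2pos)]
      nlinarith [hs2]
    linarith [s1, s2]
  · -- unbalanced case
    set a : ℝ := ((n : ℝ) - 1) * (T : ℝ) / n with hadef
    set b : ℝ := ((n : ℝ) - 1) * (T' : ℝ) / n with hbdef
    have ha : 0 ≤ a := div_nonneg (mul_nonneg hn1R (Nat.cast_nonneg _)) (le_of_lt hn0)
    have hb : 0 ≤ b := div_nonneg (mul_nonneg hn1R (Nat.cast_nonneg _)) (le_of_lt hn0)
    have hab : a + b = ((n : ℝ) - 1) ^ 2 := by
      rw [hadef, hbdef]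
      field_simp
      nlinarith [hTT'R]
    have hne : a ≠ b := by
      rw [hadef, hbdef]
      intro h
      field_simp at h
      norm_cast at h
    have hsne : Real.sqrt a ≠ Real.sqrt b := by
      intro h
      apply hne
      rw [← Real.sq_sqrt ha, ← Real.sq_sqrt hb, h]
    have hkey : Real.sqrt a + Real.sqrt b < Real.sqrt 2 * ((n : ℝ) - 1) := by
      have hsq : (Real.sqrt a + Real.sqrt b) ^ 2 < 2 * ((n : ℝ) - 1) ^ 2 := by
        have e1 : Real.sqrt a ^ 2 = a := Real.sq_sqrt ha
        have e2 : Real.sqrt b ^ 2 = b := Real.sq_sqrt hb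
        have e3 : (0 : ℝ) < (Real.sqrt a - Real.sqrt b) ^ 2 := by
          have habs := abs_pos.mpr (sub_ne_zero.mpr hsne)
          calc (0 : ℝ) < |Real.sqrt a - Real.sqrt b| ^ 2 := pow_pos habs 2
            _ = _ := sq_abs _
        nlinarith [e1, e2, e3, hab]
      have hR : (Real.sqrt 2 * ((n : ℝ) - 1)) ^ 2 = 2 * ((n : ℝ) - 1) ^ 2 := by
        rw [mul_pow, Real.sq_sqrt (by norm_num : (0:ℝ) ≤ 2)]
      have hRpos : 0 ≤ Real.sqrt 2 * ((n : ℝ) - 1) := mul_nonneg (Real.sqrt_nonneg 2) hn1R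
      refine lt_of_pow_lt_pow_left₀ 2 hRpos ?_
      rw [hR]
      exact hsq
    calc specRad (G.adjMatrix ℝ) + specRad (Gᶜ.adjMatrix ℝ) ≤ Real.sqrt a + Real.sqrt b := by
          exact add_le_add h1 h2
      _ < _ := hkey
end

section
/- Let $\rho_0 = \rho(K_{\lfloor n/3\rfloor} \vee N_{n - \lfloor n/3\rfloor}) + \rho(N_{\lfloor n/3\rfloor} + K_{n - \lfloor n/3\rfloor})$. Then $\rho_0 = \frac{1}{2}\left(2n - 3 - \lfloor n/3\rfloor + \sqrt{\left(\frac{2n-1}{3} + \lfloor n/3\rfloor\right)^2 + \frac{8 k_n}{9}}\right)$, where $k_n = 0$ if $n \equiv 2 \pmod 3$ and $k_n = 1$ otherwise. In particular $\rho_0 \ge \frac{4n-5}{3}$. -/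
/-- The complete split graph `K_q ∨ N_{n-q}` on vertex set `Fin n`:
the first `q` vertices form a clique, joined to `n - q` independent vertices. -/
def completeSplitGraph (n q : ℕ) : SimpleGraph (Fin n) where
  Adj i j := i ≠ j ∧ ((i : ℕ) < q ∨ (j : ℕ) < q)
  symm := by
    constructor
    intro i j h
    exact ⟨h.1.symm, h.2.symm⟩
  loopless := by
    constructor
    intro i h
    exact h.1 rfl

instance (n q : ℕ) : DecidableRel (completeSplitGraph n q).Adj :=
  fun i j => inferInstanceAs (Decidable (i ≠ j ∧ ((i : ℕ) < q ∨ (j : ℕ) < q)))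

open Matrix Polynomial Finset

namespace Rho0Aux

lemma scalar_mulVec {n : ℕ} (μ : ℂ) (v : Fin n → ℂ) :
    Matrix.scalar (Fin n) μ *ᵥ v = μ • v := by
  ext i
  simp [Matrix.scalar_apply, Matrix.mulVec_diagonal]

lemma isRoot_charpoly_iff {n : ℕ} (B : Matrix (Fin n) (Fin n) ℂ) (μ : ℂ) :
    B.charpoly.IsRoot μ ↔ ∃ v : Fin n → ℂ, v ≠ 0 ∧ B *ᵥ v = μ • v := by
  have h1 : B.charpoly.IsRoot μ ↔ (Matrix.scalar (Fin n) μ - B).det = 0 := by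
    rw [IsRoot, Matrix.charpoly, eval_det, matPolyEquiv_charmatrix]
    simp
  rw [h1, ← Matrix.exists_mulVec_eq_zero_iff]
  constructor
  · rintro ⟨v, hv, hv0⟩
    refine ⟨v, hv, ?_⟩
    rw [Matrix.sub_mulVec, scalar_mulVec, sub_eq_zero] at hv0
    exact hv0.symm
  · rintro ⟨v, hv, hv0⟩
    exact ⟨v, hv, by rw [Matrix.sub_mulVec, scalar_mulVec, hv0, sub_self]⟩

lemma specRad_eq {n : ℕ} (A : Matrix (Fin n) (Fin n) ℝ) (ρ : ℝ) (hρ : 0 ≤ ρ)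
    (hmem : (A.map Complex.ofReal).charpoly.IsRoot (ρ : ℂ))
    (hub : ∀ μ : ℂ, (A.map Complex.ofReal).charpoly.IsRoot μ → ‖μ‖ ≤ ρ) :
    specRad A = ρ := by
  have hρmem : ρ ∈ {x : ℝ | ∃ μ : ℂ,
      (A.map Complex.ofReal).charpoly.IsRoot μ ∧ x = ‖μ‖} :=
    ⟨(ρ:ℂ), hmem, by rw [Complex.norm_real, Real.norm_eq_abs, abs_of_nonneg hρ]⟩
  have hbdd : ∀ x ∈ {x : ℝ | ∃ μ : ℂ,
      (A.map Complex.ofReal).charpoly.IsRoot μ ∧ x = ‖μ‖}, x ≤ ρ := by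
    rintro x ⟨μ, hμ, rfl⟩
    exact hub μ hμ
  exact le_antisymm (csSup_le ⟨ρ, hρmem⟩ hbdd) (le_csSup ⟨ρ, hbdd⟩ hρmem)

lemma csg_adj {n q : ℕ} (i j : Fin n) :
    (completeSplitGraph n q).Adj i j ↔ i ≠ j ∧ ((i:ℕ) < q ∨ (j:ℕ) < q) := Iff.rfl

lemma csg_compl_adj {n q : ℕ} (i j : Fin n) :
    ((completeSplitGraph n q)ᶜ).Adj i j ↔ i ≠ j ∧ q ≤ (i:ℕ) ∧ q ≤ (j:ℕ) := by
  rw [SimpleGraph.compl_adj, csg_adj]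
  constructor
  · rintro ⟨h1, h2⟩
    push_neg at h2
    have := h2 h1
    exact ⟨h1, by omega⟩
  · rintro ⟨h1, h2, h3⟩
    exact ⟨h1, by push_neg; intro _; omega⟩

lemma map_adj {n : ℕ} (G : SimpleGraph (Fin n)) [DecidableRel G.Adj] :
    (G.adjMatrix ℝ).map Complex.ofReal = G.adjMatrix ℂ := by
  ext i j
  simp [Matrix.map_apply, SimpleGraph.adjMatrix_apply, apply_ite Complex.ofReal]

lemma sum_ite_sub {n : ℕ} (v : Fin n → ℂ) (P : Fin n → Prop) [DecidablePred P] (i : Fin n) :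
    ∑ j, (if j = i then (0:ℂ) else if P j then v j else 0) =
      (∑ j, if P j then v j else 0) - (if P i then v i else 0) := by
  have h : ∀ j : Fin n, (if j = i then (0:ℂ) else if P j then v j else 0)
      = (if P j then v j else 0) - (if j = i then (if P j then v j else 0) else 0) := by
    intro j; by_cases hj : j = i <;> simp [hj]
  simp_rw [h, Finset.sum_sub_distrib, Finset.sum_ite_eq' Finset.univ i
    (fun j => if P j then v j else 0), if_pos (Finset.mem_univ i)]

lemma split_mulVec {n q : ℕ} (v : Fin n → ℂ) (i : Fin n) :
    ((completeSplitGraph n q).adjMatrix ℂ *ᵥ v) i =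
      if (i:ℕ) < q then (∑ j, v j) - v i
      else ∑ j : Fin n, if (j:ℕ) < q then v j else 0 := by
  rw [Matrix.mulVec]
  unfold dotProduct
  simp only [SimpleGraph.adjMatrix_apply, ite_mul, one_mul, zero_mul]
  by_cases hi : (i:ℕ) < q
  · rw [if_pos hi]
    have h : ∀ j : Fin n, (if (completeSplitGraph n q).Adj i j then v j else 0)
        = (if j = i then (0:ℂ) else if True then v j else 0) := by
      intro j
      by_cases hj : j = i
      · simp [hj, csg_adj]
      · have : (completeSplitGraph n q).Adj i j := ⟨fun h => hj h.symm, Or.inl hi⟩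
        simp [hj, this]
    simp_rw [h]
    rw [sum_ite_sub v (fun _ => True) i]
    simp
  · rw [if_neg hi]
    have h : ∀ j : Fin n, (if (completeSplitGraph n q).Adj i j then v j else 0)
        = (if (j:ℕ) < q then v j else 0) := by
      intro j
      by_cases hj : (j:ℕ) < q
      · have hij : i ≠ j := by intro h; subst h; omega
        simp [hj, csg_adj, hij]
      · simp [hj, csg_adj, hi]
    simp_rw [h]

lemma compl_mulVec {n q : ℕ} (v : Fin n → ℂ) (i : Fin n) :
    (((completeSplitGraph n q)ᶜ).adjMatrix ℂ *ᵥ v) i =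
      if q ≤ (i:ℕ) then (∑ j : Fin n, if q ≤ (j:ℕ) then v j else 0) - v i else 0 := by
  rw [Matrix.mulVec]
  unfold dotProduct
  simp only [SimpleGraph.adjMatrix_apply, ite_mul, one_mul, zero_mul]
  by_cases hi : q ≤ (i:ℕ)
  · rw [if_pos hi]
    have h : ∀ j : Fin n, (if ((completeSplitGraph n q)ᶜ).Adj i j then v j else 0)
        = (if j = i then (0:ℂ) else if q ≤ (j:ℕ) then v j else 0) := by
      intro j
      by_cases hj : j = i
      · simp [hj, csg_compl_adj]
      · by_cases hjq : q ≤ (j:ℕ)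
        · have : ((completeSplitGraph n q)ᶜ).Adj i j :=
            (csg_compl_adj i j).2 ⟨fun h => hj h.symm, hi, hjq⟩
          simp [hj, hjq, this]
        · have : ¬ ((completeSplitGraph n q)ᶜ).Adj i j := by
            rw [csg_compl_adj]; tauto
          simp [hj, hjq, this]
    simp_rw [h]
    rw [sum_ite_sub v (fun j => q ≤ (j:ℕ)) i, if_pos hi]
  · rw [if_neg hi]
    have h : ∀ j : Fin n, (if ((completeSplitGraph n q)ᶜ).Adj i j then v j else 0) = 0 := by
      intro j
      have : ¬ ((completeSplitGraph n q)ᶜ).Adj i j := by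
        rw [csg_compl_adj]; tauto
      simp [this]
    simp_rw [h]
    simp

lemma card_filter_lt (n q : ℕ) (hqn : q ≤ n) :
    (Finset.univ.filter fun j : Fin n => (j:ℕ) < q).card = q := by
  have h : (Finset.univ.filter fun j : Fin n => (j:ℕ) < q) =
      Finset.attachFin (Finset.range q)
        (fun m hm => lt_of_lt_of_le (Finset.mem_range.1 hm) hqn) := by
    ext j
    simp [Finset.mem_attachFin]
  rw [h, Finset.card_attachFin, Finset.card_range]

lemma card_filter_ge (n q : ℕ) (hqn : q ≤ n) :
    (Finset.univ.filter fun j : Fin n => q ≤ (j:ℕ)).card = n - q := by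
  have h : (Finset.univ.filter fun j : Fin n => q ≤ (j:ℕ)) =
      (Finset.univ.filter fun j : Fin n => (j:ℕ) < q)ᶜ := by
    ext j; simp [not_lt]
  rw [h, Finset.card_compl, card_filter_lt n q hqn, Fintype.card_fin]

lemma sum_ite_lt_const {n q : ℕ} (hqn : q ≤ n) (c : ℂ) :
    ∑ j : Fin n, (if (j:ℕ) < q then c else 0) = (q : ℂ) * c := by
  rw [Finset.sum_ite, Finset.sum_const, Finset.sum_const_zero, add_zero,
    card_filter_lt n q hqn, nsmul_eq_mul]

lemma sum_ite_ge_const {n q : ℕ} (hqn : q ≤ n) (c : ℂ) :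
    ∑ j : Fin n, (if q ≤ (j:ℕ) then c else 0) = ((n : ℂ) - q) * c := by
  rw [Finset.sum_ite, Finset.sum_const, Finset.sum_const_zero, add_zero,
    card_filter_ge n q hqn, nsmul_eq_mul]
  congr 1
  push_cast [hqn]
  ring

lemma sum_split {n q : ℕ} (v : Fin n → ℂ) :
    ∑ j, v j = (∑ j : Fin n, if (j:ℕ) < q then v j else 0)
      + (∑ j : Fin n, if q ≤ (j:ℕ) then v j else 0) := by
  rw [← Finset.sum_add_distrib]
  apply Finset.sum_congr rfl
  intro j _
  by_cases hj : (j:ℕ) < q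
  · rw [if_pos hj, if_neg (by omega), add_zero]
  · rw [if_neg hj, if_pos (by omega), zero_add]

/-- Eigenvalue classification for the complete split graph. -/
lemma split_eig {n q : ℕ} (_hq1 : 1 ≤ q) {μ : ℂ} {v : Fin n → ℂ}
    (hv : v ≠ 0) (he : (completeSplitGraph n q).adjMatrix ℂ *ᵥ v = μ • v) (hqn : q ≤ n) :
    μ = 0 ∨ μ = -1 ∨ μ ^ 2 = ((q:ℂ) - 1) * μ + (q:ℂ) * ((n:ℂ) - q) := by
  by_cases h0 : μ = 0
  · exact Or.inl h0
  by_cases h1 : μ = -1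
  · exact Or.inr (Or.inl h1)
  refine Or.inr (Or.inr ?_)
  have hμ1 : μ + 1 ≠ 0 := fun h => h1 (by linear_combination h)
  set W := ∑ j, v j with hW
  set S := ∑ j : Fin n, if (j:ℕ) < q then v j else 0 with hS
  have eq1 : ∀ i : Fin n, (i:ℕ) < q → W - v i = μ * v i := by
    intro i hi
    have := congrFun he i
    rw [split_mulVec, if_pos hi] at this
    simpa using this
  have eq2 : ∀ i : Fin n, q ≤ (i:ℕ) → S = μ * v i := by
    intro i hi
    have := congrFun he i
    rw [split_mulVec, if_neg (by omega)] at this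
    simpa using this
  set a := W / (μ + 1) with haa
  set b := S / μ with hbb
  have ha : ∀ i : Fin n, (i:ℕ) < q → v i = a := by
    intro i hi
    rw [haa, eq_div_iff hμ1]
    linear_combination -(eq1 i hi)
  have hb : ∀ i : Fin n, q ≤ (i:ℕ) → v i = b := by
    intro i hi
    rw [hbb, eq_div_iff h0]
    linear_combination -(eq2 i hi)
  have hS_eq : S = (q:ℂ) * a := by
    rw [hS, show (∑ j : Fin n, if (j:ℕ) < q then v j else 0)
        = ∑ j : Fin n, if (j:ℕ) < q then a else 0 from
      Finset.sum_congr rfl fun j _ => by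
        by_cases hj : (j:ℕ) < q
        · rw [if_pos hj, if_pos hj, ha j hj]
        · rw [if_neg hj, if_neg hj]]
    exact sum_ite_lt_const hqn a
  have hT_eq : (∑ j : Fin n, if q ≤ (j:ℕ) then v j else 0) = ((n:ℂ) - q) * b := by
    rw [show (∑ j : Fin n, if q ≤ (j:ℕ) then v j else 0)
        = ∑ j : Fin n, if q ≤ (j:ℕ) then b else 0 from
      Finset.sum_congr rfl fun j _ => by
        by_cases hj : q ≤ (j:ℕ)
        · rw [if_pos hj, if_pos hj, hb j hj]
        · rw [if_neg hj, if_neg hj]]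
    exact sum_ite_ge_const hqn b
  have hW_eq : W = (q:ℂ) * a + ((n:ℂ) - q) * b := by
    rw [hW, sum_split (q := q) v, ← hS, hS_eq, hT_eq]
  have ha0 : a ≠ 0 := by
    intro h
    apply hv
    funext i
    show v i = 0
    by_cases hi : (i:ℕ) < q
    · rw [ha i hi, h]
    · have hb0 : b = 0 := by rw [hbb, hS_eq, h, mul_zero, zero_div]
      rw [hb i (by omega), hb0]
  have h3 : (μ + 1) * a = (q:ℂ) * a + ((n:ℂ) - q) * b := by
    rw [← hW_eq, haa, mul_div_cancel₀ _ hμ1]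
  have h2 : μ * b = (q:ℂ) * a := by
    rw [hbb, mul_div_cancel₀ _ h0, hS_eq]
  have key : (μ ^ 2 - ((q:ℂ) - 1) * μ - (q:ℂ) * ((n:ℂ) - q)) * a = 0 := by
    linear_combination μ * h3 + ((n:ℂ) - (q:ℂ)) * h2
  rcases mul_eq_zero.1 key with h | h
  · linear_combination h
  · exact absurd h ha0

/-- Eigenvalue classification for the complement. -/
lemma compl_eig {n q : ℕ} (hqn : q ≤ n) {μ : ℂ} {v : Fin n → ℂ}
    (hv : v ≠ 0) (he : ((completeSplitGraph n q)ᶜ).adjMatrix ℂ *ᵥ v = μ • v) :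
    μ = 0 ∨ μ = -1 ∨ μ = (n:ℂ) - q - 1 := by
  by_cases h0 : μ = 0
  · exact Or.inl h0
  by_cases h1 : μ = -1
  · exact Or.inr (Or.inl h1)
  refine Or.inr (Or.inr ?_)
  have hμ1 : μ + 1 ≠ 0 := fun h => h1 (by linear_combination h)
  set S := ∑ j : Fin n, if q ≤ (j:ℕ) then v j else 0 with hS
  have eq1 : ∀ i : Fin n, (i:ℕ) < q → (0:ℂ) = μ * v i := by
    intro i hi
    have := congrFun he i
    rw [compl_mulVec, if_neg (by omega)] at this
    simpa using this
  have eq2 : ∀ i : Fin n, q ≤ (i:ℕ) → S - v i = μ * v i := by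
    intro i hi
    have := congrFun he i
    rw [compl_mulVec, if_pos hi] at this
    simpa using this
  set c := S / (μ + 1) with hcc
  have hc : ∀ i : Fin n, q ≤ (i:ℕ) → v i = c := by
    intro i hi
    rw [hcc, eq_div_iff hμ1]
    linear_combination -(eq2 i hi)
  have hS_eq : S = ((n:ℂ) - q) * c := by
    rw [hS, show (∑ j : Fin n, if q ≤ (j:ℕ) then v j else 0)
        = ∑ j : Fin n, if q ≤ (j:ℕ) then c else 0 from
      Finset.sum_congr rfl fun j _ => by
        by_cases hj : q ≤ (j:ℕ)
        · rw [if_pos hj, if_pos hj, hc j hj]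
        · rw [if_neg hj, if_neg hj]]
    exact sum_ite_ge_const hqn c
  have hc0 : c ≠ 0 := by
    intro h
    apply hv
    funext i
    show v i = 0
    by_cases hi : q ≤ (i:ℕ)
    · rw [hc i hi, h]
    · have := eq1 i (by omega)
      have this := mul_eq_zero.1 this.symm
      rcases this with h' | h'
      · exact absurd h' h0
      · exact h'
  have h3 : (μ + 1) * c = ((n:ℂ) - q) * c := by
    have h4 : (μ + 1) * c = S := by rw [hcc, mul_div_cancel₀ _ hμ1]
    rw [h4, hS_eq]
  have key : (μ + 1 - ((n:ℂ) - q)) * c = 0 := by linear_combination h3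
  rcases mul_eq_zero.1 key with h | h
  · linear_combination h
  · exact absurd h hc0

end Rho0Aux

namespace Rho0Aux

lemma specRad_compl (n q : ℕ) (hq : q + 2 ≤ n) :
    specRad (((completeSplitGraph n q)ᶜ).adjMatrix ℝ) = (n:ℝ) - q - 1 := by
  have hnq : (q:ℝ) + 2 ≤ (n:ℝ) := by exact_mod_cast hq
  have hge : (1:ℝ) ≤ (n:ℝ) - q - 1 := by linarith
  have hcast : (((n:ℝ) - q - 1 : ℝ) : ℂ) = (n:ℂ) - q - 1 := by push_cast; ring
  apply specRad_eq _ _ (by linarith)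
  · rw [map_adj, isRoot_charpoly_iff]
    refine ⟨fun j => if q ≤ (j:ℕ) then 1 else 0, ?_, ?_⟩
    · intro h
      have h2 := congrFun h (⟨q, by omega⟩ : Fin n)
      simp at h2
    · funext i
      rw [compl_mulVec]
      have hsum : (∑ j : Fin n, if q ≤ (j:ℕ) then
          (if q ≤ (j:ℕ) then (1:ℂ) else 0) else 0) = ((n:ℂ) - q) * 1 := by
        rw [show (∑ j : Fin n, if q ≤ (j:ℕ) then (if q ≤ (j:ℕ) then (1:ℂ) else 0) else 0)
            = ∑ j : Fin n, if q ≤ (j:ℕ) then (1:ℂ) else 0 from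
          Finset.sum_congr rfl fun j _ => by by_cases hj : q ≤ (j:ℕ) <;> simp [hj]]
        exact sum_ite_ge_const (by omega) 1
      by_cases hi : q ≤ (i:ℕ)
      · rw [if_pos hi, hsum]
        simp only [Pi.smul_apply, smul_eq_mul, if_pos hi, hcast]
        ring
      · rw [if_neg hi]
        simp only [Pi.smul_apply, smul_eq_mul, if_neg hi, mul_zero]
  · intro μ hμ
    rw [map_adj, isRoot_charpoly_iff] at hμ
    obtain ⟨v, hv, he⟩ := hμ
    rcases compl_eig (by omega) hv he with h | h | h
    · rw [h]; simp; linarith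
    · rw [h]; simp; linarith
    · rw [h, ← hcast, Complex.norm_real, Real.norm_eq_abs, abs_of_nonneg (by linarith)]

lemma specRad_split (n q : ℕ) (hq1 : 1 ≤ q) (hq : q + 2 ≤ n) :
    specRad ((completeSplitGraph n q).adjMatrix ℝ) =
      ((q:ℝ) - 1 + Real.sqrt (((q:ℝ) - 1)^2 + 4*q*((n:ℝ) - q))) / 2 := by
  have hqR : (1:ℝ) ≤ (q:ℝ) := by exact_mod_cast hq1
  have hnq : (q:ℝ) + 2 ≤ (n:ℝ) := by exact_mod_cast hq
  have harg : (0:ℝ) ≤ ((q:ℝ) - 1)^2 + 4*q*((n:ℝ) - q) := by nlinarith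
  set s := Real.sqrt (((q:ℝ) - 1)^2 + 4*q*((n:ℝ) - q)) with hs
  have hs0 : 0 ≤ s := Real.sqrt_nonneg _
  have hs2 : s^2 = ((q:ℝ) - 1)^2 + 4*q*((n:ℝ) - q) := Real.sq_sqrt harg
  have hlam_eq : (((q:ℝ) - 1 + s)/2)^2
      = ((q:ℝ) - 1)*(((q:ℝ) - 1 + s)/2) + (q:ℝ)*((n:ℝ) - q) := by
    linear_combination hs2/4
  have hlam1 : 1 ≤ ((q:ℝ) - 1 + s)/2 := by nlinarith [hs2, hs0]
  set lam := ((q:ℝ) - 1 + s)/2 with hlam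
  have hlamC : ((lam:ℝ):ℂ)^2 = ((q:ℂ) - 1)*(lam:ℂ) + (q:ℂ)*((n:ℂ) - q) := by
    have := congrArg (Complex.ofReal) hlam_eq
    push_cast at this ⊢
    convert this using 2 <;> push_cast <;> ring
  apply specRad_eq _ _ (by linarith)
  · rw [map_adj, isRoot_charpoly_iff]
    refine ⟨fun j => if (j:ℕ) < q then (lam:ℂ) else (q:ℂ), ?_, ?_⟩
    · intro h
      have h2 := congrFun h (⟨q, by omega⟩ : Fin n)
      simp at h2
      exact absurd h2 (by exact_mod_cast Nat.one_le_iff_ne_zero.1 hq1)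
    · funext i
      rw [split_mulVec]
      have hsum1 : (∑ j : Fin n, if (j:ℕ) < q then
          (if (j:ℕ) < q then (lam:ℂ) else (q:ℂ)) else 0) = (q:ℂ) * (lam:ℂ) := by
        rw [show (∑ j : Fin n, if (j:ℕ) < q then (if (j:ℕ) < q then (lam:ℂ) else (q:ℂ)) else 0)
            = ∑ j : Fin n, if (j:ℕ) < q then (lam:ℂ) else 0 from
          Finset.sum_congr rfl fun j _ => by by_cases hj : (j:ℕ) < q <;> simp [hj]]
        exact sum_ite_lt_const (by omega) _
      have hsum2 : (∑ j : Fin n, if q ≤ (j:ℕ) then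
          (if (j:ℕ) < q then (lam:ℂ) else (q:ℂ)) else 0) = ((n:ℂ) - q) * (q:ℂ) := by
        rw [show (∑ j : Fin n, if q ≤ (j:ℕ) then (if (j:ℕ) < q then (lam:ℂ) else (q:ℂ)) else 0)
            = ∑ j : Fin n, if q ≤ (j:ℕ) then (q:ℂ) else 0 from
          Finset.sum_congr rfl fun j _ => by
            by_cases hj : q ≤ (j:ℕ)
            · rw [if_pos hj, if_pos hj, if_neg (by omega)]
            · rw [if_neg hj, if_neg hj]]
        exact sum_ite_ge_const (by omega) _
      have hW : (∑ j, (fun j : Fin n => if (j:ℕ) < q then (lam:ℂ) else (q:ℂ)) j)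
          = (q:ℂ) * (lam:ℂ) + ((n:ℂ) - q) * (q:ℂ) := by
        rw [sum_split (q := q), hsum1, hsum2]
      by_cases hi : (i:ℕ) < q
      · rw [if_pos hi, hW]
        simp only [Pi.smul_apply, smul_eq_mul, if_pos hi]
        linear_combination -hlamC
      · rw [if_neg hi, hsum1]
        simp only [Pi.smul_apply, smul_eq_mul, if_neg hi]
        ring
  · intro μ hμ
    rw [map_adj, isRoot_charpoly_iff] at hμ
    obtain ⟨v, hv, he⟩ := hμ
    rcases split_eig hq1 hv he (by omega) with h | h | h
    · rw [h]; simp; linarith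
    · rw [h]; simp; linarith
    · have hfac : (μ - (lam:ℂ)) * (μ - (((q:ℝ) - 1 - lam : ℝ):ℂ)) = 0 := by
        push_cast
        linear_combination h - hlamC
      rcases mul_eq_zero.1 hfac with h' | h'
      · rw [sub_eq_zero] at h'
        rw [h', Complex.norm_real, Real.norm_eq_abs, abs_of_nonneg (by linarith)]
      · rw [sub_eq_zero] at h'
        rw [h', Complex.norm_real, Real.norm_eq_abs]
        rw [abs_le]
        constructor
        · rw [hlam]; linarith
        · rw [hlam]; linarith

end Rho0Aux

open Rho0Aux in
/-- Proposition 4.3: with `ρ₀ = ρ(K_{⌊n/3⌋} ∨ N_{n-⌊n/3⌋}) + ρ(its complement)`,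
one has the closed formula of (4.3) and the lower bound `ρ₀ ≥ (4n-5)/3`. -/
theorem rho0_formula (n : ℕ) (hn : 3 ≤ n) (ρ₀ : ℝ)
    (hρ₀ : ρ₀ = specRad ((completeSplitGraph n (n / 3)).adjMatrix ℝ) +
        specRad (((completeSplitGraph n (n / 3))ᶜ).adjMatrix ℝ))
    (kn : ℕ) (hkn : kn = if n % 3 = 2 then 0 else 1) :
    ρ₀ = (2 * (n : ℝ) - 3 - ((n / 3 : ℕ) : ℝ) +
        Real.sqrt (((2 * (n : ℝ) - 1) / 3 + ((n / 3 : ℕ) : ℝ)) ^ 2 + 8 * (kn : ℝ) / 9)) / 2 ∧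
    (4 * (n : ℝ) - 5) / 3 ≤ ρ₀ := by
  set q := n / 3 with hqdef
  have hq1 : 1 ≤ q := by omega
  have hq2 : q + 2 ≤ n := by omega
  rw [specRad_split n q hq1 hq2, specRad_compl n q hq2] at hρ₀
  have hr : n % 3 = 0 ∨ n % 3 = 1 ∨ n % 3 = 2 := by omega
  have harg_eq : ((q:ℝ) - 1)^2 + 4*(q:ℝ)*((n:ℝ) - (q:ℝ))
      = ((2*(n:ℝ) - 1)/3 + (q:ℝ))^2 + 8*(kn:ℝ)/9 := by
    rcases hr with h | h | h
    · have hk : kn = 1 := by rw [hkn, if_neg (by omega)]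
      have hn' : (n:ℝ) = 3*(q:ℝ) := by
        have : n = 3 * q := by omega
        exact_mod_cast this
      rw [hn', hk]
      push_cast
      ring
    · have hk : kn = 1 := by rw [hkn, if_neg (by omega)]
      have hn' : (n:ℝ) = 3*(q:ℝ) + 1 := by
        have : n = 3 * q + 1 := by omega
        exact_mod_cast this
      rw [hn', hk]
      push_cast
      ring
    · have hk : kn = 0 := by rw [hkn, if_pos h]
      have hn' : (n:ℝ) = 3*(q:ℝ) + 2 := by
        have : n = 3 * q + 2 := by omega
        exact_mod_cast this
      rw [hn', hk]
      push_cast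
      ring
  have hn3 : (3:ℝ) ≤ (n:ℝ) := by exact_mod_cast hn
  have hqn : (q:ℝ) ≤ (n:ℝ) := by exact_mod_cast (by omega : q ≤ n)
  constructor
  · rw [hρ₀, ← harg_eq]
    ring
  · rw [hρ₀]
    have hq0 : (0:ℝ) ≤ (q:ℝ) := Nat.cast_nonneg q
    have hx : 0 ≤ (2*(n:ℝ) - 1)/3 + (q:ℝ) := by linarith
    have hsq : (2*(n:ℝ) - 1)/3 + (q:ℝ)
        ≤ Real.sqrt (((q:ℝ) - 1)^2 + 4*(q:ℝ)*((n:ℝ) - (q:ℝ))) := by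
      rw [harg_eq]
      calc (2*(n:ℝ) - 1)/3 + (q:ℝ)
          = Real.sqrt (((2*(n:ℝ) - 1)/3 + (q:ℝ))^2) := (Real.sqrt_sq hx).symm
        _ ≤ _ := Real.sqrt_le_sqrt (by
              have : (0:ℝ) ≤ (kn:ℝ) := Nat.cast_nonneg _
              linarith)
    linarith
end

section
/- If $n = 3k + 2$, then $\rho(K_{2k+1} \vee N_{k+1}) + \rho(N_{2k+1} + K_{k+1}) = \rho(K_{2k+2} \vee N_k) + \rho(N_{2k+2} + K_k) = 4k+1$, i.e., both $q = \lfloor n/3 \rfloor$ and $q = \lceil n/3 \rceil$ give the same value of $\rho(K_q\vee N_{n-q}) + \rho(\overline{K_q\vee N_{n-q}})$ when $n \equiv 2 \pmod 3$. -/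
open Matrix Polynomial Finset

lemma isRoot_charpoly_iff {V : Type*} [Fintype V] [DecidableEq V]
    (A : Matrix V V ℂ) (μ : ℂ) :
    A.charpoly.IsRoot μ ↔ ∃ v ≠ 0, A *ᵥ v = μ • v := by
  have hmap : (charmatrix A).map (Polynomial.evalRingHom μ) = μ • (1 : Matrix V V ℂ) - A := by
    ext i j
    by_cases h : i = j
    · subst h
      simp [charmatrix_apply_eq, Matrix.one_apply_eq]
    · simp [charmatrix_apply_ne _ _ _ h, Matrix.one_apply_ne h]
  have key : A.charpoly.IsRoot μ ↔ (μ • (1 : Matrix V V ℂ) - A).det = 0 := by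
    rw [Polynomial.IsRoot, Matrix.charpoly, ← Polynomial.coe_evalRingHom,
      RingHom.map_det, RingHom.mapMatrix_apply, hmap]
  rw [key, ← Matrix.exists_mulVec_eq_zero_iff]
  constructor
  · rintro ⟨v, hv, hv2⟩
    refine ⟨v, hv, ?_⟩
    rw [Matrix.sub_mulVec, Matrix.smul_mulVec, Matrix.one_mulVec, sub_eq_zero] at hv2
    exact hv2.symm
  · rintro ⟨v, hv, hAv⟩
    refine ⟨v, hv, ?_⟩
    rw [Matrix.sub_mulVec, Matrix.smul_mulVec, Matrix.one_mulVec, hAv, sub_self]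

lemma adjMatrix_map_ofReal {V : Type*} [Fintype V] [DecidableEq V]
    (G : SimpleGraph V) [DecidableRel G.Adj] :
    (G.adjMatrix ℝ).map Complex.ofReal = G.adjMatrix ℂ := by
  ext i j
  simp [Matrix.map_apply, SimpleGraph.adjMatrix_apply, apply_ite Complex.ofReal]

lemma specRad_eq_of {n : ℕ} (A : Matrix (Fin n) (Fin n) ℝ) (r : ℝ)
    (hmem : ∃ μ : ℂ, (A.map Complex.ofReal).charpoly.IsRoot μ ∧ r = ‖μ‖)
    (hub : ∀ μ : ℂ, (A.map Complex.ofReal).charpoly.IsRoot μ → ‖μ‖ ≤ r) :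
    specRad A = r := by
  apply IsGreatest.csSup_eq
  constructor
  · exact hmem
  · rintro x ⟨μ, h1, h2⟩
    exact h2 ▸ hub μ h1

lemma card_filter_lt (n q : ℕ) (h : q ≤ n) :
    ((Finset.univ : Finset (Fin n)).filter fun j : Fin n => (j : ℕ) < q).card = q := by
  rw [← Finset.card_range q]
  apply Finset.card_bij (fun (a : Fin n) _ => (a : ℕ))
  · intro a ha
    simp only [Finset.mem_filter] at ha
    simpa using ha.2
  · intro a _ b _ hab
    exact Fin.val_injective hab
  · intro b hb
    simp only [Finset.mem_range] at hb
    exact ⟨⟨b, lt_of_lt_of_le hb h⟩, by simp [hb], rfl⟩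

lemma card_filter_not_lt (n q : ℕ) (h : q ≤ n) :
    ((Finset.univ : Finset (Fin n)).filter fun j : Fin n => ¬ (j : ℕ) < q).card = n - q := by
  have h2 := Finset.card_filter_add_card_filter_not
    (s := (Finset.univ : Finset (Fin n))) (p := fun j : Fin n => (j : ℕ) < q)
  rw [card_filter_lt n q h, Finset.card_univ, Fintype.card_fin] at h2
  omega

lemma sum_ite_lt (n q : ℕ) (h : q ≤ n) (c d : ℂ) :
    ∑ j : Fin n, (if (j : ℕ) < q then c else d) = q * c + (n - q : ℕ) * d := by
  rw [Finset.sum_ite, Finset.sum_const, Finset.sum_const, Finset.filter_not,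
    ← Finset.filter_not]
  rw [card_filter_lt n q h, card_filter_not_lt n q h]
  simp [nsmul_eq_mul]



@[simp] lemma csg_adj {n q : ℕ} {i j : Fin n} :
    (completeSplitGraph n q).Adj i j ↔ i ≠ j ∧ ((i : ℕ) < q ∨ (j : ℕ) < q) := Iff.rfl

lemma csg_compl_adj {n q : ℕ} {i j : Fin n} :
    ((completeSplitGraph n q)ᶜ).Adj i j ↔ i ≠ j ∧ ¬ (i : ℕ) < q ∧ ¬ (j : ℕ) < q := by
  rw [SimpleGraph.compl_adj, csg_adj]
  constructor
  · rintro ⟨hne, hna⟩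
    refine ⟨hne, ?_, ?_⟩ <;> by_contra h <;> exact hna ⟨hne, by tauto⟩
  · rintro ⟨hne, h1, h2⟩
    exact ⟨hne, fun h => by tauto⟩

lemma csg_row_sum (n q : ℕ) (v : Fin n → ℂ) (i : Fin n) :
    ((completeSplitGraph n q).adjMatrix ℂ *ᵥ v) i =
      if (i : ℕ) < q then (∑ j, v j) - v i
      else ∑ j : Fin n, (if (j : ℕ) < q then v j else 0) := by
  rw [SimpleGraph.adjMatrix_mulVec_apply, SimpleGraph.neighborFinset_eq_filter,
    Finset.sum_filter]
  by_cases hi : (i : ℕ) < q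
  · rw [if_pos hi]
    have key : ∀ j : Fin n, (if (completeSplitGraph n q).Adj i j then v j else 0)
        = v j - (if j = i then v j else 0) := by
      intro j
      by_cases hj : j = i
      · subst hj
        simp [csg_adj]
      · have h2 : (completeSplitGraph n q).Adj i j := ⟨Ne.symm hj, Or.inl hi⟩
        rw [if_pos h2, if_neg hj, sub_zero]
    rw [Finset.sum_congr rfl (fun j _ => key j), Finset.sum_sub_distrib,
      Finset.sum_ite_eq' Finset.univ i v]
    simp
  · rw [if_neg hi]
    apply Finset.sum_congr rfl
    intro j _
    by_cases hj : (j : ℕ) < q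
    · have hne : i ≠ j := fun h => hi (h ▸ hj)
      simp [csg_adj, hne, hj]
    · simp [csg_adj, hj, hi]

lemma csg_compl_row_sum (n q : ℕ) (v : Fin n → ℂ) (i : Fin n) :
    (((completeSplitGraph n q)ᶜ).adjMatrix ℂ *ᵥ v) i =
      if (i : ℕ) < q then 0
      else (∑ j : Fin n, (if ¬ (j : ℕ) < q then v j else 0)) - v i := by
  rw [SimpleGraph.adjMatrix_mulVec_apply, SimpleGraph.neighborFinset_eq_filter,
    Finset.sum_filter]
  by_cases hi : (i : ℕ) < q
  · rw [if_pos hi]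
    apply Finset.sum_eq_zero
    intro j _
    rw [if_neg]
    rw [csg_compl_adj]
    tauto
  · rw [if_neg hi]
    have key : ∀ j : Fin n, (if ((completeSplitGraph n q)ᶜ).Adj i j then v j else 0)
        = (if ¬ (j : ℕ) < q then v j else 0) - (if j = i then v j else 0) := by
      intro j
      by_cases hj : j = i
      · subst hj
        have : ¬ ((completeSplitGraph n q)ᶜ).Adj j j := (completeSplitGraph n q)ᶜ.loopless.irrefl j
        simp [this, hi]
      · by_cases hjq : (j : ℕ) < q
        · have : ¬ ((completeSplitGraph n q)ᶜ).Adj i j := by rw [csg_compl_adj]; tauto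
          simp [this, hj, hjq]
        · have : ((completeSplitGraph n q)ᶜ).Adj i j := csg_compl_adj.mpr ⟨Ne.symm hj, hi, hjq⟩
          simp [this, hj, hjq]
    rw [Finset.sum_congr rfl (fun j _ => key j), Finset.sum_sub_distrib,
      Finset.sum_ite_eq' Finset.univ i v]
    simp

lemma specRad_csg (n q : ℕ) (hq : 1 ≤ q) (hqn : q < n) (r : ℝ)
    (hr1 : 1 ≤ r) (hrq : (q : ℝ) - 1 ≤ r)
    (heq : r ^ 2 = ((q : ℝ) - 1) * r + (q : ℝ) * ((n : ℝ) - (q : ℝ))) :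
    specRad ((completeSplitGraph n q).adjMatrix ℝ) = r := by
  have hq1 : (1 : ℝ) ≤ (q : ℝ) := by exact_mod_cast hq
  have heqC : (r : ℂ) ^ 2 = ((q : ℂ) - 1) * (r : ℂ) + (q : ℂ) * ((n : ℂ) - (q : ℂ)) := by
    exact_mod_cast heq
  have hnq : ((n - q : ℕ) : ℂ) = (n : ℂ) - (q : ℂ) := by
    push_cast [Nat.cast_sub hqn.le]; ring
  apply specRad_eq_of
  · -- membership
    refine ⟨(r : ℂ), ?_, ?_⟩
    · rw [adjMatrix_map_ofReal, isRoot_charpoly_iff]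
      refine ⟨fun i => if (i : ℕ) < q then (r : ℂ) else (q : ℂ), ?_, ?_⟩
      · intro h0
        have h1 := congrFun h0 ⟨0, by omega⟩
        simp only [Pi.zero_apply] at h1
        rw [if_pos (by show 0 < q; omega)] at h1
        have : r = 0 := by exact_mod_cast h1
        linarith
      · funext i
        rw [csg_row_sum]
        simp only [Pi.smul_apply, smul_eq_mul]
        by_cases hi : (i : ℕ) < q
        · rw [if_pos hi, if_pos hi, sum_ite_lt n q hqn.le, hnq]
          linear_combination -heqC
        · rw [if_neg hi, if_neg hi]
          have : ∀ j : Fin n, (if (j : ℕ) < q then (if (j : ℕ) < q then (r:ℂ) else (q:ℂ)) else 0)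
              = (if (j : ℕ) < q then (r : ℂ) else 0) := by
            intro j; by_cases hj : (j : ℕ) < q <;> simp [hj]
          rw [Finset.sum_congr rfl (fun j _ => this j), sum_ite_lt n q hqn.le]
          ring
    · rw [Complex.norm_real, Real.norm_eq_abs, abs_of_nonneg (by linarith)]
  · -- upper bound
    intro μ hroot
    rw [adjMatrix_map_ofReal, isRoot_charpoly_iff] at hroot
    obtain ⟨v, hv, hAv⟩ := hroot
    set T := ∑ j, v j with hTdef
    set S := ∑ j : Fin n, (if (j : ℕ) < q then v j else 0) with hSdef
    have E1 : ∀ i : Fin n, (i : ℕ) < q → μ * v i = T - v i := by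
      intro i hi
      have h := congrFun hAv i
      rw [csg_row_sum, if_pos hi] at h
      simpa using h.symm
    have E2 : ∀ i : Fin n, ¬ (i : ℕ) < q → μ * v i = S := by
      intro i hi
      have h := congrFun hAv i
      rw [csg_row_sum, if_neg hi] at h
      simpa using h.symm
    by_cases h0 : μ = 0
    · subst h0; simp; linarith
    by_cases h1 : μ = -1
    · subst h1
      have habs : ‖(-1 : ℂ)‖ = 1 := by
        rw [show ((-1 : ℂ)) = (((-1 : ℝ)) : ℂ) by norm_num, Complex.norm_real, Real.norm_eq_abs]
        norm_num
      rw [habs]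
      linarith
    have hμ1 : μ + 1 ≠ 0 := fun h => h1 (by linear_combination h)
    set a := T / (μ + 1) with hadef
    set b := S / μ with hbdef
    have hva : ∀ i : Fin n, (i : ℕ) < q → v i = a := by
      intro i hi
      rw [hadef, eq_div_iff hμ1]
      linear_combination E1 i hi
    have hvb : ∀ i : Fin n, ¬ (i : ℕ) < q → v i = b := by
      intro i hi
      rw [hbdef, eq_div_iff h0]
      linear_combination E2 i hi
    have hS : S = (q : ℂ) * a := by
      have step : S = ∑ j : Fin n, (if (j : ℕ) < q then a else 0) := by
        apply Finset.sum_congr rfl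
        intro j _
        by_cases hj : (j : ℕ) < q
        · simp [hj, hva j hj]
        · simp [hj]
      rw [step, sum_ite_lt n q hqn.le]
      ring
    have hT : T = (q : ℂ) * a + ((n : ℂ) - (q : ℂ)) * b := by
      have step : T = ∑ j : Fin n, (if (j : ℕ) < q then a else b) := by
        apply Finset.sum_congr rfl
        intro j _
        by_cases hj : (j : ℕ) < q
        · simp [hj, hva j hj]
        · simp [hj, hvb j hj]
      rw [step, sum_ite_lt n q hqn.le, hnq]
    have hb0 : μ * b = (q : ℂ) * a := by
      rw [hbdef, mul_div_cancel₀ _ h0, hS]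
    have hTa : (μ + 1) * a = T := by
      rw [hadef, mul_div_cancel₀ _ hμ1]
    have ha0 : (μ + 1) * a = (q : ℂ) * a + ((n : ℂ) - (q : ℂ)) * b := by
      rw [hTa, hT]
    have haz : a ≠ 0 := by
      intro haz
      have hbz : b = 0 := by
        have := hb0
        rw [haz, mul_zero] at this
        exact (mul_eq_zero.mp this).resolve_left h0
      obtain ⟨i0, hvi0⟩ := Function.ne_iff.mp hv
      apply hvi0
      by_cases hi : (i0 : ℕ) < q
      · rw [hva i0 hi, haz]; rfl
      · rw [hvb i0 hi, hbz]; rfl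
    have quad : μ ^ 2 = ((q : ℂ) - 1) * μ + (q : ℂ) * ((n : ℂ) - (q : ℂ)) := by
      have h2 : μ * ((μ + 1) * a) = μ * ((q : ℂ) * a) + ((n : ℂ) - (q : ℂ)) * (μ * b) := by
        rw [ha0]; ring
      rw [hb0] at h2
      have h3 : (μ ^ 2 - ((q : ℂ) - 1) * μ - (q : ℂ) * ((n : ℂ) - (q : ℂ))) * a = 0 := by
        linear_combination h2
      rcases mul_eq_zero.mp h3 with h4 | h4
      · linear_combination h4
      · exact absurd h4 haz
    have hfac : (μ - (r : ℂ)) * (μ - ((q : ℂ) - 1 - (r : ℂ))) = 0 := by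
      linear_combination quad - heqC
    rcases mul_eq_zero.mp hfac with h | h
    · rw [sub_eq_zero.mp h, Complex.norm_real, Real.norm_eq_abs, abs_of_nonneg (by linarith)]
    · have hμr : μ = (((q : ℝ) - 1 - r : ℝ) : ℂ) := by
        push_cast
        linear_combination h
      rw [hμr, Complex.norm_real, Real.norm_eq_abs, abs_of_nonpos (by linarith)]
      linarith

lemma specRad_csg_compl (n q : ℕ) (h : q + 2 ≤ n) :
    specRad (((completeSplitGraph n q)ᶜ).adjMatrix ℝ) = (n : ℝ) - (q : ℝ) - 1 := by
  have hcast : (q : ℝ) + 2 ≤ (n : ℝ) := by exact_mod_cast h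
  have hnq : ((n - q : ℕ) : ℂ) = (n : ℂ) - (q : ℂ) := by
    push_cast [Nat.cast_sub (by omega : q ≤ n)]; ring
  apply specRad_eq_of
  · refine ⟨((n : ℝ) - (q : ℝ) - 1 : ℝ), ?_, ?_⟩
    · rw [adjMatrix_map_ofReal, isRoot_charpoly_iff]
      refine ⟨fun i => if (i : ℕ) < q then 0 else 1, ?_, ?_⟩
      · intro h0
        have h1 := congrFun h0 ⟨q, by omega⟩
        simp only [Pi.zero_apply] at h1
        rw [if_neg (by simp)] at h1
        exact one_ne_zero h1
      · funext i
        rw [csg_compl_row_sum]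
        simp only [Pi.smul_apply, smul_eq_mul]
        by_cases hi : (i : ℕ) < q
        · rw [if_pos hi, if_pos hi]
          ring
        · rw [if_neg hi, if_neg hi]
          have step : ∀ j : Fin n, (if ¬ (j : ℕ) < q then (if (j : ℕ) < q then (0:ℂ) else 1) else 0)
              = (if (j : ℕ) < q then (0:ℂ) else 1) := by
            intro j; by_cases hj : (j : ℕ) < q <;> simp [hj]
          rw [Finset.sum_congr rfl (fun j _ => step j), sum_ite_lt n q (by omega), hnq]
          push_cast
          ring
    · rw [Complex.norm_real, Real.norm_eq_abs, abs_of_nonneg (by linarith)]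
  · intro μ hroot
    rw [adjMatrix_map_ofReal, isRoot_charpoly_iff] at hroot
    obtain ⟨v, hv, hAv⟩ := hroot
    set S := ∑ j : Fin n, (if ¬ (j : ℕ) < q then v j else 0) with hSdef
    have F1 : ∀ i : Fin n, (i : ℕ) < q → μ * v i = 0 := by
      intro i hi
      have hh := congrFun hAv i
      rw [csg_compl_row_sum, if_pos hi] at hh
      simp only [Pi.smul_apply, smul_eq_mul] at hh
      exact hh.symm
    have F2 : ∀ i : Fin n, ¬ (i : ℕ) < q → μ * v i = S - v i := by
      intro i hi
      have hh := congrFun hAv i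
      rw [csg_compl_row_sum, if_neg hi] at hh
      simp only [Pi.smul_apply, smul_eq_mul] at hh
      exact hh.symm
    by_cases h0 : μ = 0
    · subst h0; simp; linarith
    by_cases h1 : μ = -1
    · subst h1
      have habs : ‖(-1 : ℂ)‖ = 1 := by
        rw [show ((-1 : ℂ)) = (((-1 : ℝ)) : ℂ) by norm_num, Complex.norm_real, Real.norm_eq_abs]
        norm_num
      rw [habs]
      linarith
    have hμ1 : μ + 1 ≠ 0 := fun hz => h1 (by linear_combination hz)
    set b := S / (μ + 1) with hbdef
    have hva : ∀ i : Fin n, (i : ℕ) < q → v i = 0 := by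
      intro i hi
      have := F1 i hi
      exact (mul_eq_zero.mp this).resolve_left h0
    have hvb : ∀ i : Fin n, ¬ (i : ℕ) < q → v i = b := by
      intro i hi
      rw [hbdef, eq_div_iff hμ1]
      linear_combination F2 i hi
    have hS : S = ((n : ℂ) - (q : ℂ)) * b := by
      have step : S = ∑ j : Fin n, (if (j : ℕ) < q then 0 else b) := by
        apply Finset.sum_congr rfl
        intro j _
        by_cases hj : (j : ℕ) < q <;> simp [hj, hvb]
      rw [step, sum_ite_lt n q (by omega), hnq]
      ring
    have hbz : b ≠ 0 := by
      intro hbz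
      obtain ⟨i0, hvi0⟩ := Function.ne_iff.mp hv
      apply hvi0
      by_cases hi : (i0 : ℕ) < q
      · rw [hva i0 hi]; rfl
      · rw [hvb i0 hi, hbz]; rfl
    have hSb : (μ + 1) * b = S := by
      rw [hbdef, mul_div_cancel₀ _ hμ1]
    have key : (μ + 1) * b = ((n : ℂ) - (q : ℂ)) * b := by
      rw [hSb, hS]
    have hμval : μ = (((n : ℝ) - (q : ℝ) - 1 : ℝ) : ℂ) := by
      have h3 : (μ + 1 - ((n : ℂ) - (q : ℂ))) * b = 0 := by linear_combination key
      rcases mul_eq_zero.mp h3 with h4 | h4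
      · push_cast
        linear_combination h4
      · exact absurd h4 hbz
    rw [hμval, Complex.norm_real, Real.norm_eq_abs, abs_of_nonneg (by linarith)]


/-- When `n = 3k + 2`, both `q = ⌊n/3⌋ = k` and `q = ⌈n/3⌉ = k + 1` give the same
value `4k + 1` of `ρ(K_q ∨ N_{n-q}) + ρ(complement of K_q ∨ N_{n-q})`
(the complement being `N_q + K_{n-q}`). -/
theorem rho_sum_n_eq_two_mod_three (k : ℕ) (hk : 1 ≤ k) :
    specRad ((completeSplitGraph (3 * k + 2) (k + 1)).adjMatrix ℝ) +
      specRad (((completeSplitGraph (3 * k + 2) (k + 1))ᶜ).adjMatrix ℝ) = 4 * (k : ℝ) + 1 ∧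
    specRad ((completeSplitGraph (3 * k + 2) k).adjMatrix ℝ) +
      specRad (((completeSplitGraph (3 * k + 2) k)ᶜ).adjMatrix ℝ) = 4 * (k : ℝ) + 1 := by
  have hk1 : (1 : ℝ) ≤ (k : ℝ) := by exact_mod_cast hk
  constructor
  · rw [specRad_csg (3 * k + 2) (k + 1) (by omega) (by omega) (2 * (k : ℝ) + 1)
      (by linarith) (by push_cast; linarith) (by push_cast; ring),
      specRad_csg_compl (3 * k + 2) (k + 1) (by omega)]
    push_cast
    ring
  · rw [specRad_csg (3 * k + 2) k hk (by omega) (2 * (k : ℝ))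
      (by linarith) (by push_cast; linarith) (by push_cast; ring),
      specRad_csg_compl (3 * k + 2) k (by omega)]
    push_cast
    ring
end

section
/- Let $A \in \mathscr{S}^*(n)$ with parameters $(c, v, s)$ and complement parameters $(\overline{c}, \overline{v}, \overline{s})$ obtained from $\overline{A}$ defined by $\overline{a}_{ij} = 1 - a_{n-j+1, n-i+1}$ for $i \ne j$. If $c + \overline{c} \ge n$, then $s + \overline{s} \le -\frac{3}{4}(c+\overline{c})^2 + (n+1)(c+\overline{c}) - \frac{1}{4}(c-\overline{c})^2 - v - \overline{c}$, with equality when $\overline{v} = n - c - 1$. -/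
/-- Membership in `𝒮*(n)`: `(0,1)`-matrix with zero diagonal, `a₁₂ = a₂₁ = 1`,
`a_{n-1,n} = a_{n,n-1} = 0` (indices 1-based), and the staircase condition:
if `a_{ij} = 1` then `a_{hk} = 1` for all `h ≤ i`, `k ≤ j` with `h ≠ k`. -/
structure MemSStar (n : ℕ) (A : Matrix (Fin n) (Fin n) ℝ) : Prop where
  entries : ∀ i j, A i j = 0 ∨ A i j = 1
  diag : ∀ i, A i i = 0
  a12 : ∀ i j : Fin n, (i : ℕ) = 0 → (j : ℕ) = 1 → A i j = 1 ∧ A j i = 1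
  alast : ∀ i j : Fin n, (i : ℕ) = n - 2 → (j : ℕ) = n - 1 → A i j = 0 ∧ A j i = 0
  staircase : ∀ i j h k : Fin n, A i j = 1 → h ≤ i → k ≤ j → h ≠ k → A h k = 1

/-- The sum of the first `i` row sums of `A`. -/
noncomputable def sumFirst {n : ℕ} (A : Matrix (Fin n) (Fin n) ℝ) (i : ℕ) : ℝ :=
  ∑ j ∈ Finset.univ.filter (fun j : Fin n => (j : ℕ) < i), ∑ kk, A j kk

/-- The parameter `c(A) = max { i : r₁ + ⋯ + rᵢ > i(i-1) }`. -/
noncomputable def cpar {n : ℕ} (A : Matrix (Fin n) (Fin n) ℝ) : ℕ :=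
  Nat.findGreatest (fun i => ((i * (i - 1) : ℕ) : ℝ) < sumFirst A i) n

/-- The `i`-th row sum of `A` (1-based index `i+1`; `0` if out of range). -/
noncomputable def rowSumAt {n : ℕ} (A : Matrix (Fin n) (Fin n) ℝ) (i : ℕ) : ℝ :=
  if h : i < n then ∑ j, A ⟨i, h⟩ j else 0

/-- The parameter `v(A) = r_{c+1}`. -/
noncomputable def vpar {n : ℕ} (A : Matrix (Fin n) (Fin n) ℝ) : ℝ :=
  rowSumAt A (cpar A)

/-- The parameter `s(A) = ∑_{i ≤ c} rᵢ - c(c-1)`. -/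
noncomputable def spar {n : ℕ} (A : Matrix (Fin n) (Fin n) ℝ) : ℝ :=
  sumFirst A (cpar A) - (cpar A : ℝ) * ((cpar A : ℝ) - 1)

/-- `φ(A) = (v - 1 + √((2c - v - 1)² + 4s)) / 2`. -/
noncomputable def phiPar {n : ℕ} (A : Matrix (Fin n) (Fin n) ℝ) : ℝ :=
  (vpar A - 1 + Real.sqrt ((2 * (cpar A : ℝ) - vpar A - 1) ^ 2 + 4 * spar A)) / 2

/-- The reflected complement `Ā`, with `ā_{ij} = 1 - a_{n-j+1, n-i+1}` off the
diagonal (1-based indices) and zero diagonal. -/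
def reflComp {n : ℕ} (A : Matrix (Fin n) (Fin n) ℝ) : Matrix (Fin n) (Fin n) ℝ :=
  Matrix.of fun i j => if i = j then 0 else 1 - A j.rev i.rev

section AuxSStar

open Finset

/-- Initial segment of `Fin n`. -/
def Flt (n k : ℕ) : Finset (Fin n) := Finset.univ.filter fun i : Fin n => (i:ℕ) < k

/-- Final segment of `Fin n`. -/
def Fge (n k : ℕ) : Finset (Fin n) := Finset.univ.filter fun i : Fin n => ¬ (i:ℕ) < k

lemma mem_Flt {n k : ℕ} {i : Fin n} : i ∈ Flt n k ↔ (i:ℕ) < k := by simp [Flt]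

lemma mem_Fge {n k : ℕ} {i : Fin n} : i ∈ Fge n k ↔ k ≤ (i:ℕ) := by simp [Fge]

lemma sum_Flt_add_sum_Fge {n k : ℕ} (f : Fin n → ℝ) :
    ∑ i ∈ Flt n k, f i + ∑ i ∈ Fge n k, f i = ∑ i, f i :=
  Finset.sum_filter_add_sum_filter_not _ _ _

lemma card_Flt {n : ℕ} (k : ℕ) (hk : k ≤ n) : (Flt n k).card = k := by
  rw [show Flt n k =
      (Finset.range k).attachFin (fun m hm => lt_of_lt_of_le (Finset.mem_range.mp hm) hk) by
    ext i; simp [Flt, Finset.mem_attachFin]]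
  simp

lemma sum_one_Flt {n : ℕ} (k : ℕ) (hk : k ≤ n) : ∑ _i ∈ Flt n k, (1:ℝ) = k := by
  rw [Finset.sum_const, card_Flt k hk]; simp

lemma sum_ind_Flt {n : ℕ} (k l : ℕ) (hl : l ≤ k) (hk : k ≤ n) :
    ∑ i ∈ Flt n k, (if (i:ℕ) < l then (1:ℝ) else 0) = l := by
  rw [show (∑ i ∈ Flt n k, (if (i:ℕ) < l then (1:ℝ) else 0)) = ∑ i ∈ (Flt n k).filter
      (fun i : Fin n => (i:ℕ) < l), (1:ℝ) from (Finset.sum_filter _ _).symm]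
  rw [show (Flt n k).filter (fun i : Fin n => (i:ℕ) < l) = Flt n l by
    ext i; simp [Flt]; omega]
  exact sum_one_Flt l (le_trans hl hk)

/-- Count of off-diagonal positions in the `c × p` block. -/
lemma blockCount {n : ℕ} (c p : ℕ) (hpc : p ≤ c) (hc : c ≤ n) :
    ∑ i ∈ Flt n c, ∑ j ∈ Flt n p, (if i = j then (0:ℝ) else 1) = (c:ℝ) * p - p := by
  have hpn : p ≤ n := le_trans hpc hc
  have inner : ∀ i : Fin n, ∑ j ∈ Flt n p, (if i = j then (0:ℝ) else 1)
      = (p:ℝ) - (if (i:ℕ) < p then (1:ℝ) else 0) := by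
    intro i
    have h1 : ∀ j ∈ Flt n p, (if i = j then (0:ℝ) else 1)
        = 1 - (if i = j then (1:ℝ) else 0) := by
      intro j _; by_cases h : i = j <;> simp [h]
    rw [Finset.sum_congr rfl h1, Finset.sum_sub_distrib, sum_one_Flt p hpn,
      Finset.sum_ite_eq]
    simp [mem_Flt]
  rw [Finset.sum_congr rfl (fun i _ => inner i), Finset.sum_sub_distrib,
    Finset.sum_const, card_Flt c hc, sum_ind_Flt c p hpc hc]
  simp [mul_comm]

lemma rowSumReflComp {n : ℕ} (A : Matrix (Fin n) (Fin n) ℝ) (hdiag : ∀ i, A i i = 0)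
    (i : Fin n) : ∑ j, reflComp A i j = (n:ℝ) - 1 - ∑ k, A k i.rev := by
  have h1 : ∀ j : Fin n, reflComp A i j
      = (1 - A j.rev i.rev) - (if i = j then (1 - A j.rev i.rev) else 0) := by
    intro j; by_cases h : i = j
    · subst h; simp [reflComp, hdiag]
    · simp [reflComp, h]
  rw [Finset.sum_congr rfl (fun j _ => h1 j), Finset.sum_sub_distrib,
    Finset.sum_ite_eq, Finset.sum_sub_distrib]
  have h2 : ∑ j : Fin n, A j.rev i.rev = ∑ k, A k i.rev :=
    Fintype.sum_bijective Fin.rev Fin.rev_bijective _ _ (fun _ => rfl)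
  simp [h2, hdiag, Finset.card_univ]
  ring

end AuxSStar

/-- Lemma 5.1 (inequality (5.1)): for `A ∈ 𝒮*(n)` with parameters `(c, v, s)` and
complement parameters `(c̄, v̄, s̄)`, if `c + c̄ ≥ n` then
`s + s̄ ≤ -(3/4)(c+c̄)² + (n+1)(c+c̄) - (1/4)(c-c̄)² - v - c̄`,
with equality when `v̄ = n - c - 1`. -/
theorem spar_add_spar_reflComp_bound {n : ℕ} (A : Matrix (Fin n) (Fin n) ℝ)
    (hA : MemSStar n A) (h : n ≤ cpar A + cpar (reflComp A)) :
    spar A + spar (reflComp A) ≤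
      -(3 / 4) * ((cpar A : ℝ) + (cpar (reflComp A) : ℝ)) ^ 2 +
        ((n : ℝ) + 1) * ((cpar A : ℝ) + (cpar (reflComp A) : ℝ)) -
        (1 / 4) * ((cpar A : ℝ) - (cpar (reflComp A) : ℝ)) ^ 2 -
        vpar A - (cpar (reflComp A) : ℝ) ∧
    (vpar (reflComp A) = (n : ℝ) - (cpar A : ℝ) - 1 →
      spar A + spar (reflComp A) =
        -(3 / 4) * ((cpar A : ℝ) + (cpar (reflComp A) : ℝ)) ^ 2 +
          ((n : ℝ) + 1) * ((cpar A : ℝ) + (cpar (reflComp A) : ℝ)) -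
          (1 / 4) * ((cpar A : ℝ) - (cpar (reflComp A) : ℝ)) ^ 2 -
          vpar A - (cpar (reflComp A) : ℝ)) := by
  classical
  set c := cpar A with hc
  set cb := cpar (reflComp A) with hcb
  have hcn' : c ≤ n := Nat.findGreatest_le n
  have hcbn' : cb ≤ n := Nat.findGreatest_le n
  set p := n - cb with hp
  have hpc : p ≤ c := by omega
  have hpn : p ≤ n := by omega
  have h01 : ∀ i j, 0 ≤ A i j ∧ A i j ≤ 1 := by
    intro i j; rcases hA.entries i j with h' | h' <;> simp [h']
  -- Block sums
  set B1 := ∑ i ∈ Flt n c, ∑ j ∈ Flt n p, A i j with hB1def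
  set B2 := ∑ i ∈ Fge n c, ∑ j ∈ Fge n p, A i j with hB2def
  set X := ∑ i ∈ Flt n c, ∑ j ∈ Fge n p, A i j with hXdef
  -- sumFirst A c = B1 + X
  have hS1 : sumFirst A c = B1 + X := by
    have e : sumFirst A c = ∑ i ∈ Flt n c, ∑ j, A i j := rfl
    rw [e, hB1def, hXdef, ← Finset.sum_add_distrib]
    exact Finset.sum_congr rfl fun i _ => (sum_Flt_add_sum_Fge _).symm
  -- sumFirst (reflComp A) cb = cb(n-1) - (X + B2)
  have hrow := rowSumReflComp A hA.diag
  have hS2 : sumFirst (reflComp A) cb = (cb:ℝ) * ((n:ℝ) - 1) - (X + B2) := by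
    have e : sumFirst (reflComp A) cb = ∑ i ∈ Flt n cb, ∑ j, reflComp A i j := rfl
    rw [e, Finset.sum_congr rfl (fun i _ => hrow i), Finset.sum_sub_distrib,
      Finset.sum_const, card_Flt cb hcbn']
    have himg : (Flt n cb).image Fin.rev = Fge n p := by
      ext j
      simp only [Finset.mem_image, mem_Flt, mem_Fge]
      constructor
      · rintro ⟨a, ha, rfl⟩
        rw [Fin.val_rev]
        have := a.isLt
        omega
      · intro hj
        refine ⟨j.rev, ?_, Fin.rev_rev j⟩
        rw [Fin.val_rev]
        have := j.isLt
        omega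
    have e2 : ∑ i ∈ Flt n cb, (∑ k, A k i.rev) = ∑ j ∈ Fge n p, ∑ k, A k j := by
      have e2' := Finset.sum_image (s := Flt n cb) (g := Fin.rev)
        (f := fun j : Fin n => ∑ k, A k j) (fun x _ y _ hxy => Fin.rev_injective hxy)
      rw [← himg]
      exact e2'.symm
    have e3 : ∑ j ∈ Fge n p, ∑ k, A k j = X + B2 := by
      have e4 : ∀ j ∈ Fge n p, ∑ k, A k j
          = ∑ i ∈ Flt n c, A i j + ∑ i ∈ Fge n c, A i j :=
        fun j _ => (sum_Flt_add_sum_Fge _).symm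
      rw [Finset.sum_congr rfl e4, Finset.sum_add_distrib, hXdef, hB2def]
      exact congrArg₂ (· + ·) Finset.sum_comm Finset.sum_comm
    rw [e2, e3]
    simp [nsmul_eq_mul]
  -- key identity
  have hkey : spar A + spar (reflComp A)
      = B1 - B2 + (cb:ℝ) * ((n:ℝ) - 1) - (c:ℝ) * ((c:ℝ) - 1) - (cb:ℝ) * ((cb:ℝ) - 1) := by
    have e1 : spar A = sumFirst A c - (c:ℝ) * ((c:ℝ) - 1) := by rw [hc]; rfl
    have e2 : spar (reflComp A) = sumFirst (reflComp A) cb - (cb:ℝ) * ((cb:ℝ) - 1) := by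
      rw [hcb]; rfl
    rw [e1, e2, hS1, hS2]; ring
  have hpcast : (p:ℝ) = (n:ℝ) - (cb:ℝ) := by
    rw [hp]; push_cast [hcbn']; ring
  -- Bound B1
  have hB1le : B1 ≤ (c:ℝ) * (p:ℝ) - (p:ℝ) := by
    calc B1 ≤ ∑ i ∈ Flt n c, ∑ j ∈ Flt n p, (if i = j then (0:ℝ) else 1) := by
          refine Finset.sum_le_sum fun i _ => Finset.sum_le_sum fun j _ => ?_
          by_cases hij : i = j
          · subst hij; simp [hA.diag i]
          · simp [hij]; exact (h01 i j).2
      _ = (c:ℝ) * p - p := blockCount c p hpc hcn'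
  -- Bound B2
  have hB2ge : vpar A - (p:ℝ) ≤ B2 := by
    by_cases hcn : c < n
    · have hv : vpar A = ∑ j, A ⟨c, hcn⟩ j := by
        have e : vpar A = rowSumAt A c := by rw [hc]; rfl
        rw [e]; exact dif_pos hcn
      have h1 : ∑ j ∈ Fge n p, A ⟨c, hcn⟩ j ≤ B2 := by
        refine Finset.single_le_sum (f := fun i => ∑ j ∈ Fge n p, A i j) ?_ ?_
        · exact fun i _ => Finset.sum_nonneg fun j _ => (h01 i j).1
        · rw [mem_Fge]
      have h2 := sum_Flt_add_sum_Fge (k := p) (fun j => A ⟨c, hcn⟩ j)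
      have h3 : ∑ j ∈ Flt n p, A ⟨c, hcn⟩ j ≤ (p:ℝ) := by
        calc ∑ j ∈ Flt n p, A ⟨c, hcn⟩ j ≤ ∑ _j ∈ Flt n p, (1:ℝ) :=
              Finset.sum_le_sum fun j _ => (h01 _ j).2
          _ = p := sum_one_Flt p hpn
      rw [hv]
      linarith
    · have hv : vpar A = 0 := by
        have e : vpar A = rowSumAt A c := by rw [hc]; rfl
        rw [e]; exact dif_neg hcn
      have h1 : (0:ℝ) ≤ B2 :=
        Finset.sum_nonneg fun i _ => Finset.sum_nonneg fun j _ => (h01 i j).1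
      have h2 : (0:ℝ) ≤ (p:ℝ) := Nat.cast_nonneg p
      rw [hv]; linarith
  constructor
  · rw [hpcast] at hB1le hB2ge
    linarith [hkey, hB1le, hB2ge]
  · intro hvb
    -- equality case
    have main : B1 = (c:ℝ) * (p:ℝ) - (p:ℝ) ∧ B2 = vpar A - (p:ℝ) := by
      by_cases hcblt : cb < n
      · -- cb < n
        have hp1 : 1 ≤ p := by omega
        have hBnn : ∀ i j, 0 ≤ reflComp A i j := by
          intro i j
          by_cases hij : i = j
          · simp [reflComp, hij]
          · simp [reflComp, hij]; exact (h01 _ _).2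
        have hcn : c < n := by
          by_contra hcn'
          have hceq : c = n := by omega
          have hvb0 : 0 ≤ vpar (reflComp A) := by
            have e : vpar (reflComp A) = rowSumAt (reflComp A) cb := by rw [hcb]; rfl
            rw [e, show rowSumAt (reflComp A) cb = ∑ j, reflComp A ⟨cb, hcblt⟩ j from dif_pos hcblt]
            exact Finset.sum_nonneg fun j _ => hBnn _ j
          have hcr : (c:ℝ) = (n:ℝ) := by exact_mod_cast hceq
          rw [hvb] at hvb0
          linarith
        set jp : Fin n := ⟨p - 1, by omega⟩ with hjp
        set rcb : Fin n := ⟨cb, hcblt⟩ with hrcb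
        have hrevcb : rcb.rev = jp := by
          apply Fin.ext
          rw [Fin.val_rev]
          simp [hrcb, hjp]
          omega
        have hq : ∑ k, A k jp = (c:ℝ) := by
          have e : vpar (reflComp A) = ∑ j, reflComp A rcb j := by
            have e' : vpar (reflComp A) = rowSumAt (reflComp A) cb := by rw [hcb]; rfl
            rw [e', show rowSumAt (reflComp A) cb = ∑ j, reflComp A ⟨cb, hcblt⟩ j from dif_pos hcblt]
          rw [hvb, hrow rcb, hrevcb] at e
          linarith [e]
        have hE1 : A ⟨c, hcn⟩ jp = 1 := by
          rcases hA.entries ⟨c, hcn⟩ jp with h0 | h1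
          · exfalso
            have hz : ∀ i : Fin n, c ≤ (i:ℕ) → A i jp = 0 := by
              intro i hi
              rcases hA.entries i jp with h' | h'
              · exact h'
              · exfalso
                have hne : (⟨c, hcn⟩ : Fin n) ≠ jp := by
                  intro he
                  have := congrArg Fin.val he
                  simp [hjp] at this
                  omega
                have := hA.staircase i jp ⟨c, hcn⟩ jp h' (Fin.le_def.mpr hi) le_rfl hne
                rw [h0] at this; norm_num at this
            have hsplit := sum_Flt_add_sum_Fge (k := c) (fun i => A i jp)
            have h2 : ∑ i ∈ Fge n c, A i jp = 0 :=
              Finset.sum_eq_zero fun i hi => hz i (mem_Fge.mp hi)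
            have h3 : ∑ i ∈ Flt n c, A i jp ≤ (c:ℝ) - 1 := by
              have hb : ∀ i ∈ Flt n c, A i jp ≤ (if i = jp then (0:ℝ) else 1) := by
                intro i _
                by_cases he : i = jp
                · subst he; simp [hA.diag]
                · simp [he]; exact (h01 i jp).2
              have hmemjp : jp ∈ Flt n c := by rw [mem_Flt]; simp [hjp]; omega
              calc ∑ i ∈ Flt n c, A i jp ≤ ∑ i ∈ Flt n c, (if i = jp then (0:ℝ) else 1) :=
                    Finset.sum_le_sum hb
                _ = ∑ i ∈ Flt n c, ((1:ℝ) - (if i = jp then (1:ℝ) else 0)) := by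
                    refine Finset.sum_congr rfl fun i _ => ?_
                    by_cases he : i = jp <;> simp [he]
                _ = (c:ℝ) - 1 := by
                    rw [Finset.sum_sub_distrib, sum_one_Flt c hcn', Finset.sum_ite_eq',
                      if_pos hmemjp]
            linarith
          · exact h1
        have key1 : ∀ hh k : Fin n, (hh:ℕ) ≤ c → (k:ℕ) ≤ p - 1 → hh ≠ k → A hh k = 1 := by
          intro hh k h1 h2 hne
          exact hA.staircase ⟨c, hcn⟩ jp hh k hE1 (Fin.le_def.mpr h1) (Fin.le_def.mpr h2) hne
        have hz2 : ∀ i j : Fin n, c + 1 ≤ (i:ℕ) → p ≤ (j:ℕ) → A i j = 0 := by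
          intro i j hi hj
          rcases hA.entries i j with h' | h'
          · exact h'
          · exfalso
            have hin : c + 2 ≤ n := by have := i.isLt; omega
            have hjj : jp ≤ j := by
              rw [Fin.le_def]
              simp [hjp]
              omega
            have hcol : ∀ k : Fin n, (k:ℕ) ≤ (i:ℕ) → k ≠ jp → A k jp = 1 := by
              intro k hk hne
              exact hA.staircase i j k jp h' (Fin.le_def.mpr hk) hjj hne
            have hmemjp : jp ∈ Flt n (c + 2) := by rw [mem_Flt]; simp [hjp]; omega
            have h4 : ((c:ℝ) + 2) - 1 ≤ ∑ k ∈ Flt n (c + 2), A k jp := by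
              have hb : ∀ k ∈ Flt n (c + 2), ((1:ℝ) - (if k = jp then (1:ℝ) else 0)) ≤ A k jp := by
                intro k hk
                by_cases he : k = jp
                · subst he; simp [hA.diag]
                · simp [he]
                  rw [hcol k (by rw [mem_Flt] at hk; omega) he]
              calc ((c:ℝ) + 2) - 1
                  = ∑ k ∈ Flt n (c + 2), ((1:ℝ) - (if k = jp then (1:ℝ) else 0)) := by
                    rw [Finset.sum_sub_distrib, sum_one_Flt (c + 2) hin, Finset.sum_ite_eq',
                      if_pos hmemjp]
                    push_cast
                    ring
                _ ≤ ∑ k ∈ Flt n (c + 2), A k jp := Finset.sum_le_sum hb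
            have h5 : ∑ k ∈ Flt n (c + 2), A k jp ≤ ∑ k, A k jp :=
              Finset.sum_le_sum_of_subset_of_nonneg (Finset.filter_subset _ _)
                (fun k _ _ => (h01 k jp).1)
            rw [hq] at h5
            linarith
        constructor
        · -- B1 exact
          rw [hB1def]
          rw [show (∑ i ∈ Flt n c, ∑ j ∈ Flt n p, A i j)
              = ∑ i ∈ Flt n c, ∑ j ∈ Flt n p, (if i = j then (0:ℝ) else 1) from
            Finset.sum_congr rfl fun i hi => Finset.sum_congr rfl fun j hj => by
              by_cases he : i = j
              · subst he; simp [hA.diag]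
              · simp [he]
                exact key1 i j (le_of_lt (mem_Flt.mp hi)) (by have := mem_Flt.mp hj; omega) he]
          exact blockCount c p hpc hcn'
        · -- B2 exact
          have hmemc : (⟨c, hcn⟩ : Fin n) ∈ Fge n c := by rw [mem_Fge]
          have hsingle : ∀ i ∈ Fge n c, i ≠ ⟨c, hcn⟩ → ∑ j ∈ Fge n p, A i j = 0 := by
            intro i hi hne
            refine Finset.sum_eq_zero fun j hj => ?_
            refine hz2 i j ?_ (mem_Fge.mp hj)
            have h6 : c ≤ (i:ℕ) := mem_Fge.mp hi
            have h7 : (i:ℕ) ≠ c := fun he => hne (Fin.ext he)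
            omega
          have e1 : B2 = ∑ j ∈ Fge n p, A ⟨c, hcn⟩ j := by
            rw [hB2def]
            exact Finset.sum_eq_single_of_mem _ hmemc hsingle
          have e2 : ∑ j ∈ Flt n p, A ⟨c, hcn⟩ j = (p:ℝ) := by
            rw [show (∑ j ∈ Flt n p, A ⟨c, hcn⟩ j) = ∑ _j ∈ Flt n p, (1:ℝ) from
              Finset.sum_congr rfl fun j hj => key1 ⟨c, hcn⟩ j le_rfl
                (by have h8 := mem_Flt.mp hj; omega)
                (by intro he
                    have h9 : (c:ℕ) = (j:ℕ) := congrArg Fin.val he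
                    have h8 := mem_Flt.mp hj
                    omega)]
            exact sum_one_Flt p hpn
          have e3 : vpar A = ∑ j, A ⟨c, hcn⟩ j := by
            have e : vpar A = rowSumAt A c := by rw [hc]; rfl
            rw [e]; exact dif_pos hcn
          have e4 := sum_Flt_add_sum_Fge (k := p) (fun j => A ⟨c, hcn⟩ j)
          rw [e1, e3]
          linarith
      · -- cb = n
        have hcbe : cb = n := by omega
        have hvb0 : vpar (reflComp A) = 0 := by
          have e : vpar (reflComp A) = rowSumAt (reflComp A) cb := by rw [hcb]; rfl
          rw [e]; exact dif_neg hcblt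
        rw [hvb0] at hvb
        have hcr : (c:ℝ) = (n:ℝ) - 1 := by linarith
        have hcnat : c + 1 = n := by
          have h1 : ((c:ℕ):ℝ) + 1 = ((n:ℕ):ℝ) := by linarith
          exact_mod_cast h1
        have hcn : c < n := by omega
        have hp0 : p = 0 := by omega
        constructor
        · rw [hB1def, hp0]
          rw [show Flt n 0 = (∅ : Finset (Fin n)) by ext i; simp [Flt]]
          simp
        · have hGceq : Fge n c = {(⟨c, hcn⟩ : Fin n)} := by
            ext i
            rw [mem_Fge, Finset.mem_singleton]
            constructor
            · intro hi
              apply Fin.ext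
              have := i.isLt
              simp
              omega
            · intro hi; subst hi; simp
          have hGpu : Fge n p = (Finset.univ : Finset (Fin n)) := by
            ext j; rw [mem_Fge]; simp [hp0]
          have e3 : vpar A = ∑ j, A ⟨c, hcn⟩ j := by
            have e : vpar A = rowSumAt A c := by rw [hc]; rfl
            rw [e]; exact dif_pos hcn
          have hpr : (p:ℝ) = 0 := by rw [hp0]; simp
          rw [hB2def, hGceq, hGpu, Finset.sum_singleton, e3, hpr]
          ring
    obtain ⟨hB1eq, hB2eq⟩ := main
    rw [hpcast] at hB1eq hB2eq
    linarith [hkey, hB1eq, hB2eq]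
end

section
/- Let $A \in \mathscr{S}^*(n)$ with parameters $(c, v, s)$ and complement parameters $(\overline{c}, \overline{v}, \overline{s})$, where either $v \ge n - \overline{c}$ or (after swapping $A$ and $\overline{A}$) this may be assumed. Then $c + \overline{c} < \frac{4n}{3} + \frac{1}{3}$. -/
namespace CparAux

lemma exists_nat_sumFirst {n : ℕ} (A : Matrix (Fin n) (Fin n) ℝ)
    (h01 : ∀ i j, A i j = 0 ∨ A i j = 1) (i : ℕ) :
    ∃ m : ℕ, sumFirst A i = (m : ℝ) := by
  classical
  refine ⟨∑ j ∈ Finset.univ.filter (fun j : Fin n => (j : ℕ) < i),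
      ∑ k, (if A j k = 1 then 1 else 0), ?_⟩
  rw [sumFirst, Nat.cast_sum]
  refine Finset.sum_congr rfl fun j _ => ?_
  rw [Nat.cast_sum]
  refine Finset.sum_congr rfl fun k _ => ?_
  rcases h01 j k with h | h <;> simp [h]

lemma entries01_reflComp {n : ℕ} (A : Matrix (Fin n) (Fin n) ℝ)
    (h01 : ∀ i j, A i j = 0 ∨ A i j = 1) :
    ∀ i j, reflComp A i j = 0 ∨ reflComp A i j = 1 := by
  intro i j
  by_cases h : i = j
  · left; simp [reflComp, h]
  · rcases h01 j.rev i.rev with h' | h'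
    · right; simp [reflComp, h, h']
    · left; simp [reflComp, h, h']

lemma sumFirst_reflComp_eq {n : ℕ} (A : Matrix (Fin n) (Fin n) ℝ) (c' : ℕ) :
    sumFirst (reflComp A) c' =
      ∑ i : Fin n, ∑ j : Fin n,
        (if n ≤ c' + (j : ℕ) ∧ j ≠ i then 1 - A i j else 0) := by
  calc sumFirst (reflComp A) c'
      = ∑ p : Fin n, ∑ q : Fin n,
          (if (p : ℕ) < c' then (if p = q then 0 else 1 - A q.rev p.rev) else 0) := by
        rw [sumFirst, Finset.sum_filter]
        refine Finset.sum_congr rfl fun p _ => ?_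
        split_ifs with h
        · rfl
        · simp
    _ = ∑ p : Fin n, ∑ q : Fin n,
          (if ((p.rev : ℕ)) < c' then (if p.rev = q.rev then 0 else 1 - A q.rev.rev p.rev.rev) else 0) := by
        rw [← Equiv.sum_comp (Fin.revPerm (n := n))
          (fun p => ∑ q : Fin n, (if (p : ℕ) < c' then (if p = q then 0 else 1 - A q.rev p.rev) else 0))]
        refine Finset.sum_congr rfl fun p _ => ?_
        rw [← Equiv.sum_comp (Fin.revPerm (n := n))
          (fun q => if ((Fin.revPerm p : Fin n) : ℕ) < c' then (if Fin.revPerm p = q then 0 else 1 - A q.rev (Fin.revPerm p).rev) else 0)]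
        rfl
    _ = ∑ p : Fin n, ∑ q : Fin n,
          (if n ≤ c' + (p : ℕ) ∧ p ≠ q then 1 - A q p else 0) := by
        refine Finset.sum_congr rfl fun p _ => Finset.sum_congr rfl fun q _ => ?_
        rw [Fin.rev_rev, Fin.rev_rev]
        have hpn : (p : ℕ) < n := p.isLt
        have hcond : ((p.rev : ℕ) < c') ↔ (n ≤ c' + (p : ℕ)) := by
          rw [Fin.val_rev]; omega
        have heq : (p.rev = q.rev) ↔ p = q := Fin.rev_inj
        simp only [hcond, heq]
        by_cases h2 : n ≤ c' + (p : ℕ) <;> by_cases h3 : p = q <;>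
          simp [h2, h3]
    _ = ∑ i : Fin n, ∑ j : Fin n,
          (if n ≤ c' + (j : ℕ) ∧ j ≠ i then 1 - A i j else 0) := by
        rw [Finset.sum_comm]

lemma count_ge (N m : ℕ) : (∑ k ∈ Finset.range N, if m ≤ k then 1 else 0 : ℕ) = N - m := by
  induction N with
  | zero => simp
  | succ N ih =>
    rw [Finset.sum_range_succ, ih]
    by_cases h : m ≤ N <;> simp [h] <;> omega

lemma count_lt (N M : ℕ) : (∑ k ∈ Finset.range N, if k < M then 1 else 0 : ℕ) = min M N := by
  induction N with
  | zero => simp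
  | succ N ih =>
    rw [Finset.sum_range_succ, ih]
    by_cases h : N < M <;> simp [h] <;> omega

lemma sum_ind_ge (n c : ℕ) (h : c ≤ n) :
    ∑ i : Fin n, (if c ≤ (i : ℕ) then (1 : ℝ) else 0) = (n : ℝ) - c := by
  rw [Fin.sum_univ_eq_sum_range (fun k => if c ≤ k then (1 : ℝ) else 0) n]
  have := count_ge n c
  have hcast : ((∑ k ∈ Finset.range n, if c ≤ k then 1 else 0 : ℕ) : ℝ)
      = ∑ k ∈ Finset.range n, (if c ≤ k then (1:ℝ) else 0) := by
    rw [Nat.cast_sum]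
    refine Finset.sum_congr rfl fun k _ => ?_
    split_ifs <;> simp
  rw [← hcast, this, Nat.cast_sub h]

lemma sum_ind_lt (n c' : ℕ) (h : c' ≤ n) :
    ∑ j : Fin n, (if c' + (j : ℕ) < n then (1 : ℝ) else 0) = (n : ℝ) - c' := by
  have hcond : ∀ k : ℕ, (c' + k < n) ↔ (k < n - c') := by intro k; omega
  rw [Fin.sum_univ_eq_sum_range (fun k => if c' + k < n then (1 : ℝ) else 0) n]
  have := count_lt n (n - c')
  have hcast : ((∑ k ∈ Finset.range n, if k < n - c' then 1 else 0 : ℕ) : ℝ)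
      = ∑ k ∈ Finset.range n, (if c' + k < n then (1:ℝ) else 0) := by
    rw [Nat.cast_sum]
    refine Finset.sum_congr rfl fun k _ => ?_
    by_cases hk : k < n - c'
    · rw [if_pos hk, if_pos ((hcond k).mpr hk)]; simp
    · rw [if_neg hk, if_neg (fun hc => hk ((hcond k).mp hc))]; simp
  rw [← hcast, this]
  rw [min_eq_left (by omega)]
  rw [Nat.cast_sub h]

lemma sumFirst_eq_double {n : ℕ} (A : Matrix (Fin n) (Fin n) ℝ) (c : ℕ) :
    sumFirst A c = ∑ i : Fin n, ∑ j : Fin n, (if (i : ℕ) < c then A i j else 0) := by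
  rw [sumFirst, Finset.sum_filter]
  refine Finset.sum_congr rfl fun i _ => ?_
  split_ifs with h
  · rfl
  · simp

lemma geom {n c c' : ℕ} (A : Matrix (Fin n) (Fin n) ℝ)
    (h01 : ∀ i j, A i j = 0 ∨ A i j = 1) (hdiag : ∀ i, A i i = 0)
    (hcn : c ≤ n) (hc'n : c' ≤ n) (hcc : n ≤ c + c') :
    sumFirst A c + sumFirst (reflComp A) c' ≤
      (n : ℝ) * n - n - ((n : ℝ) - c) * ((n : ℝ) - c') := by
  have key : ∀ i j : Fin n,
      (if (i : ℕ) < c then A i j else 0) +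
        (if n ≤ c' + (j : ℕ) ∧ j ≠ i then 1 - A i j else 0) ≤
      (if i = j then (0:ℝ) else 1) -
        (if c ≤ (i : ℕ) then (1:ℝ) else 0) * (if c' + (j : ℕ) < n then (1:ℝ) else 0) := by
    intro i j
    have hin : (i : ℕ) < n := i.isLt
    have hjn : (j : ℕ) < n := j.isLt
    by_cases hd : i = j
    · subst hd
      rw [if_pos rfl]
      have h1 : (if (i : ℕ) < c then A i i else 0) = 0 := by split_ifs <;> simp [hdiag i]
      have h2 : (if n ≤ c' + (i : ℕ) ∧ i ≠ i then 1 - A i i else 0) = 0 := by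
        rw [if_neg]; rintro ⟨-, h⟩; exact h rfl
      rw [h1, h2]
      have h3 : (if c ≤ (i:ℕ) then (1:ℝ) else 0) * (if c' + (i:ℕ) < n then (1:ℝ) else 0) = 0 := by
        split_ifs with ha hb
        · omega
        · ring
        · ring
        · ring
      rw [h3]; norm_num
    · rw [if_neg hd]
      have hcond : (n ≤ c' + (j : ℕ) ∧ j ≠ i) ↔ (n ≤ c' + (j : ℕ)) :=
        and_iff_left (fun h => hd h.symm)
      simp only [hcond]
      rcases h01 i j with ha | ha <;>
        · rw [ha]; split_ifs <;> linarith
  calc sumFirst A c + sumFirst (reflComp A) c'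
      = ∑ i : Fin n, ∑ j : Fin n,
          ((if (i : ℕ) < c then A i j else 0) +
           (if n ≤ c' + (j : ℕ) ∧ j ≠ i then 1 - A i j else 0)) := by
        rw [sumFirst_eq_double, sumFirst_reflComp_eq, ← Finset.sum_add_distrib]
        exact Finset.sum_congr rfl fun i _ => (Finset.sum_add_distrib).symm
    _ ≤ ∑ i : Fin n, ∑ j : Fin n,
          ((if i = j then (0:ℝ) else 1) -
            (if c ≤ (i : ℕ) then (1:ℝ) else 0) * (if c' + (j : ℕ) < n then (1:ℝ) else 0)) :=
        Finset.sum_le_sum fun i _ => Finset.sum_le_sum fun j _ => key i j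
    _ = (n : ℝ) * n - n - ((n : ℝ) - c) * ((n : ℝ) - c') := by
        simp_rw [Finset.sum_sub_distrib]
        have e1 : ∑ i : Fin n, ∑ j : Fin n, (if i = j then (0:ℝ) else 1) = (n:ℝ) * ((n:ℝ) - 1) := by
          have hrow : ∀ i : Fin n, ∑ j : Fin n, (if i = j then (0:ℝ) else 1) = (n:ℝ) - 1 := by
            intro i
            have : ∀ j : Fin n, (if i = j then (0:ℝ) else 1) = 1 - (if i = j then (1:ℝ) else 0) :=
              fun j => by split_ifs <;> ring
            simp_rw [this]
            rw [Finset.sum_sub_distrib, Finset.sum_const, Finset.sum_ite_eq]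
            simp [Finset.card_univ]
          simp_rw [hrow]
          rw [Finset.sum_const, Finset.card_univ]
          simp [Fintype.card_fin]
        have e2 : ∑ i : Fin n, ∑ j : Fin n,
            (if c ≤ (i : ℕ) then (1:ℝ) else 0) * (if c' + (j : ℕ) < n then (1:ℝ) else 0)
            = ((n:ℝ) - c) * ((n:ℝ) - c') := by
          rw [← Finset.sum_mul_sum, sum_ind_ge n c hcn, sum_ind_lt n c' hc'n]
        rw [e1, e2]; ring

lemma pos_sumFirst_one {n : ℕ} (B : Matrix (Fin n) (Fin n) ℝ)
    (h01 : ∀ i j, B i j = 0 ∨ B i j = 1) (hn : 0 < n) (j1 : Fin n)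
    (hone : B ⟨0, hn⟩ j1 = 1) : 0 < sumFirst B 1 := by
  have hnn : ∀ p q, 0 ≤ B p q := fun p q => by rcases h01 p q with h | h <;> simp [h]
  have h1 : B ⟨0, hn⟩ j1 ≤ ∑ k, B ⟨0, hn⟩ k :=
    Finset.single_le_sum (fun k _ => hnn _ k) (Finset.mem_univ j1)
  have h2 : ∑ k, B ⟨0, hn⟩ k ≤ sumFirst B 1 := by
    refine Finset.single_le_sum (f := fun p => ∑ k, B p k)
      (fun p _ => Finset.sum_nonneg fun k _ => hnn p k) ?_
    simp
  rw [hone] at h1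
  linarith

end CparAux

open CparAux in
/-- Lemma 5.1 (inequality (5.2)): for `A ∈ 𝒮*(n)` with parameters `c = c(A)` and
`c̄ = c(Ā)`, one has `c + c̄ < 4n/3 + 1/3`. -/
theorem cpar_add_cpar_reflComp_lt {n : ℕ} (A : Matrix (Fin n) (Fin n) ℝ)
    (hA : MemSStar n A) :
    (cpar A : ℝ) + (cpar (reflComp A) : ℝ) < 4 * (n : ℝ) / 3 + 1 / 3 := by
  have hcA : cpar A = Nat.findGreatest (fun i => ((i * (i - 1) : ℕ) : ℝ) < sumFirst A i) n := rfl
  have hcB : cpar (reflComp A) =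
      Nat.findGreatest (fun i => ((i * (i - 1) : ℕ) : ℝ) < sumFirst (reflComp A) i) n := rfl
  -- trivial small cases
  rcases Nat.lt_or_ge n 3 with hn3 | hn3
  · interval_cases n
    · -- n = 0
      have h0 : cpar A = 0 := by rw [hcA]; rfl
      have h0' : cpar (reflComp A) = 0 := by rw [hcB]; rfl
      rw [h0, h0']; norm_num
    · -- n = 1
      have hz : ∀ B : Matrix (Fin 1) (Fin 1) ℝ, B 0 0 = 0 → cpar B = 0 := by
        intro B hd
        unfold cpar
        rw [Nat.findGreatest_eq_zero_iff]
        intro k hk hk1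
        have hk' : k = 1 := by omega
        subst hk'
        have hs : sumFirst B 1 = 0 := by
          have h' : sumFirst B 1 = B 0 0 := by
            rw [sumFirst, Finset.sum_filter, Fin.sum_univ_one, Fin.sum_univ_one]
            norm_num
          rw [h', hd]
        simp [hs]
      rw [hz A (hA.diag 0), hz (reflComp A) (by simp [reflComp])]
      norm_num
    · -- n = 2 : contradictory hypotheses
      exfalso
      have h1 := (hA.a12 ⟨0, by omega⟩ ⟨1, by omega⟩ rfl rfl).1
      have h2 := (hA.alast ⟨0, by omega⟩ ⟨1, by omega⟩ rfl rfl).1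
      rw [h1] at h2
      norm_num at h2
  -- main case : n ≥ 3
  have hn1 : 1 ≤ n := by omega
  have hn0 : 0 < n := by omega
  have hcn : cpar A ≤ n := by rw [hcA]; exact Nat.findGreatest_le n
  have hc'n : cpar (reflComp A) ≤ n := by rw [hcB]; exact Nat.findGreatest_le n
  set c := cpar A with hc
  set c' := cpar (reflComp A) with hc'
  clear_value c c'
  rcases Nat.lt_or_ge (c + c') n with hcase | hcase
  · -- c + c' < n : immediate
    have : (c : ℝ) + (c' : ℝ) ≤ (n : ℝ) - 1 := by
      have : (c + c' + 1 : ℕ) ≤ n := hcase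
      have := Nat.cast_le (α := ℝ).mpr this
      push_cast at this
      linarith
    have hnn : (0:ℝ) ≤ (n:ℝ) := by positivity
    linarith
  · -- c + c' ≥ n
    -- P holds at 1 for A
    have hP1A : (((1 * (1 - 1) : ℕ)) : ℝ) < sumFirst A 1 := by
      have hone : A ⟨0, hn0⟩ ⟨1, by omega⟩ = 1 :=
        (hA.a12 ⟨0, hn0⟩ ⟨1, by omega⟩ rfl rfl).1
      have := pos_sumFirst_one A hA.entries hn0 ⟨1, by omega⟩ hone
      simpa using this
    -- P holds at 1 for reflComp A
    have hB01 := entries01_reflComp A hA.entries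
    have hP1B : (((1 * (1 - 1) : ℕ)) : ℝ) < sumFirst (reflComp A) 1 := by
      have hrev1 : (((⟨1, by omega⟩ : Fin n).rev : ℕ)) = n - 2 := by
        rw [Fin.val_rev]
      have hrev0 : (((⟨0, hn0⟩ : Fin n).rev : ℕ)) = n - 1 := by
        rw [Fin.val_rev]
      have hzero : A (⟨1, by omega⟩ : Fin n).rev (⟨0, hn0⟩ : Fin n).rev = 0 :=
        (hA.alast _ _ hrev1 hrev0).1
      have hone : reflComp A ⟨0, hn0⟩ ⟨1, by omega⟩ = 1 := by
        have hne : (⟨0, hn0⟩ : Fin n) ≠ ⟨1, by omega⟩ := by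
          intro h; exact absurd (congrArg Fin.val h) (by norm_num)
        simp only [reflComp, Matrix.of_apply, if_neg hne, hzero]
        norm_num
      have := pos_sumFirst_one (reflComp A) hB01 hn0 ⟨1, by omega⟩ hone
      simpa using this
    have hc1 : 1 ≤ c := by rw [hcA]; exact Nat.le_findGreatest hn1 hP1A
    have hc'1 : 1 ≤ c' := by rw [hcB]; exact Nat.le_findGreatest hn1 hP1B
    have hPc : (((c * (c - 1) : ℕ)) : ℝ) < sumFirst A c := by
      rw [hcA]
      exact Nat.findGreatest_spec (P := fun i => ((i * (i - 1) : ℕ) : ℝ) < sumFirst A i) hn1 hP1A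
    have hPc' : (((c' * (c' - 1) : ℕ)) : ℝ) < sumFirst (reflComp A) c' := by
      rw [hcB]
      exact Nat.findGreatest_spec
        (P := fun i => ((i * (i - 1) : ℕ) : ℝ) < sumFirst (reflComp A) i) hn1 hP1B
    -- integrality lower bounds
    obtain ⟨m₁, hm₁⟩ := exists_nat_sumFirst A hA.entries c
    obtain ⟨m₂, hm₂⟩ := exists_nat_sumFirst (reflComp A) hB01 c'
    have hlow1 : (c : ℝ) * ((c : ℝ) - 1) + 1 ≤ sumFirst A c := by
      rw [hm₁] at hPc ⊢
      have h1 : (c * (c - 1) : ℕ) < m₁ := by exact_mod_cast hPc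
      have h2 : (c * (c - 1) + 1 : ℕ) ≤ m₁ := h1
      have h3 := Nat.cast_le (α := ℝ).mpr h2
      push_cast [Nat.cast_sub hc1] at h3
      linarith
    have hlow2 : (c' : ℝ) * ((c' : ℝ) - 1) + 1 ≤ sumFirst (reflComp A) c' := by
      rw [hm₂] at hPc' ⊢
      have h1 : (c' * (c' - 1) : ℕ) < m₂ := by exact_mod_cast hPc'
      have h2 : (c' * (c' - 1) + 1 : ℕ) ≤ m₂ := h1
      have h3 := Nat.cast_le (α := ℝ).mpr h2
      push_cast [Nat.cast_sub hc'1] at h3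
      linarith
    -- the geometric counting bound
    have hgeo := geom A hA.entries hA.diag hcn hc'n hcase
    -- final arithmetic
    suffices hfin : 3 * (c + c') ≤ 4 * n by
      have := Nat.cast_le (α := ℝ).mpr hfin
      push_cast at this
      linarith
    by_contra hcon
    push_neg at hcon
    have hcon' : 4 * n + 1 ≤ 3 * (c + c') := hcon
    have hconR : 4 * (n:ℝ) + 1 ≤ 3 * ((c:ℝ) + (c':ℝ)) := by
      have := Nat.cast_le (α := ℝ).mpr hcon'
      push_cast at this
      linarith
    have hxyR : (n : ℝ) ≤ (c:ℝ) + (c':ℝ) := by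
      have := Nat.cast_le (α := ℝ).mpr hcase
      push_cast at this
      linarith
    have hN3 : (3:ℝ) ≤ (n:ℝ) := by exact_mod_cast hn3
    have hx1 : (1:ℝ) ≤ (c:ℝ) := by exact_mod_cast hc1
    have hy1 : (1:ℝ) ≤ (c':ℝ) := by exact_mod_cast hc'1
    rw [hm₁] at hlow1
    rw [hm₂] at hlow2
    rw [hm₁, hm₂] at hgeo
    clear hcA hcB hc hc' hA hP1A hP1B hB01 hPc hPc' hm₁ hm₂ hcon hcon'
    have hq : (c:ℝ) * c + (c':ℝ) * c' + (c:ℝ) * c' ≤ ((n:ℝ) + 1) * ((c:ℝ) + c') - n - 2 := by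
      nlinarith [hlow1, hlow2, hgeo]
    have ht : 3 * ((c:ℝ) + c') ^ 2 ≤ 4 * ((n:ℝ) + 1) * ((c:ℝ) + c') - 4 * n - 8 := by
      nlinarith [hq, sq_nonneg ((c:ℝ) - c')]
    have h1 : (3 * ((c:ℝ) + c') - (4 * n + 1)) * ((c:ℝ) + c') ≥ 0 :=
      mul_nonneg (by linarith) (by linarith)
    have h2 : 3 * ((c:ℝ) + c') - (4 * (n:ℝ) + 8) ≥ 0 := by nlinarith [h1, ht]
    have h3 : (3 * ((c:ℝ) + c') - (4 * (n:ℝ) + 8)) * ((c:ℝ) + c') ≥ 0 :=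
      mul_nonneg h2 (by linarith)
    nlinarith [h3, ht]
end
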